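/- Let k be an even integer and let F : ℍ₂ → ℂ be continuous with F|_k γ = F for all γ ∈ Γ₂ = Sp₂(ℤ). Suppose F has an absolutely convergent Fourier expansion F(X + iY) = Σ_N A(N, Y) e^{2πi tr(NX)}, where N runs over half-integral symmetric matrices N = [[n, r/2],[r/2, m]] (n, r, m ∈ ℤ) and Y runs over real symmetric positive definite 2×2 matrices; extend A by A(M, Y) := 0 whenever the symmetric matrix M is not half-integral. Then F|T_p• = F|T_p_• for every prime p if and only if for every prime p, every half-integral N = [[n, r/2],[r/2, m]], and every positive definite Y = [[y₁, y₂],[y₂, y₃]] with y₁y₃ > p·y₂²: p^{k−1}·A([[n/p, r/(2p)],[r/(2p), m]], [[p·y₁, p·y₂],[p·y₂, y₃]]) + A([[p·n, r/2],[r/2, m]], [[y₁/p, y₂],[y₂, y₃]]) = p^{k−1}·A([[n, r/(2p)],[r/(2p), m/p]], [[y₁, p·y₂],[p·y₂, p·y₃]]) + A([[n, r/2],[r/2, p·m]], [[y₁, y₂],[y₂, y₃/p]]). -/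

import Mathlib

open Matrix Complex Filter Topology

noncomputable section

abbrev M2C := Matrix (Fin 2) (Fin 2) ℂ
abbrev M2R := Matrix (Fin 2) (Fin 2) ℝ
abbrev M2Q := Matrix (Fin 2) (Fin 2) ℚ
abbrev M4R := Matrix (Fin 2 ⊕ Fin 2) (Fin 2 ⊕ Fin 2) ℝ

/-- The standard symplectic form of degree 2. -/
def J4 : M4R := Matrix.fromBlocks 0 1 (-1) 0

/-- `g` is a real symplectic matrix of degree 2. -/
def IsSymplectic (g : M4R) : Prop := gᵀ * J4 * g = J4

/-- all entries of `g` are integers -/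
def IsIntegral4 (g : M4R) : Prop := ∀ i j, ∃ n : ℤ, g i j = (n : ℝ)

/-- The Siegel modular group `Γ₂ = Sp₂(ℤ)` (as a set of real matrices). -/
def Sp2Z : Set M4R := {g | IsSymplectic g ∧ IsIntegral4 g}

/-- `Γ_{2,0}`: elements of `Γ₂` whose lower-left 2×2 block is `0`. -/
def Gamma20 : Set M4R := {g | g ∈ Sp2Z ∧ Matrix.toBlocks₂₁ g = 0}

/-- entrywise coercion of a real 4×4 matrix to a complex one -/
def mapC (g : M4R) : Matrix (Fin 2 ⊕ Fin 2) (Fin 2 ⊕ Fin 2) ℂ := g.map (fun x => (x : ℂ))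

/-- The action `g(Z) = (AZ+B)(CZ+D)⁻¹` of `Sp₂(ℝ)` on the Siegel upper half space. -/
def smul4 (g : M4R) (Z : M2C) : M2C :=
  ((mapC g).toBlocks₁₁ * Z + (mapC g).toBlocks₁₂) * ((mapC g).toBlocks₂₁ * Z + (mapC g).toBlocks₂₂)⁻¹

/-- The factor of automorphy `j(g,Z) = det (CZ + D)`. -/
def jfac (g : M4R) (Z : M2C) : ℂ := ((mapC g).toBlocks₂₁ * Z + (mapC g).toBlocks₂₂).det

/-- entrywise imaginary part -/
def ImM (Z : M2C) : M2R := Z.map Complex.im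

/-- The Siegel upper half space of degree 2. -/
def SiegelH2 : Set M2C := {Z | Z.IsSymm ∧ (ImM Z).PosDef}

/-- `δ(Z) := det (Im Z)` -/
def Hdelta (Z : M2C) : ℝ := (ImM Z).det

/-- The summand `j(g,Z)^{-k} δ(g(Z))^s` of the Siegel Eisenstein series. -/
def eisSummand (k : ℤ) (s : ℂ) (g : M4R) (Z : M2C) : ℂ :=
  jfac g Z ^ (-k) * ((Hdelta (smul4 g Z) : ℂ)) ^ s

/-- `Γ = SL₂(ℤ)` as a set of real 2×2 matrices. -/
def SL2Zset : Set M2R := {g | g.det = 1 ∧ ∀ i j, ∃ n : ℤ, g i j = (n : ℝ)}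

/-- `Γ_∞`: upper triangular elements of `SL₂(ℤ)`. -/
def GammaInf : Set M2R := {g | g ∈ SL2Zset ∧ g 1 0 = 0}

/-- The embedding `(A,B) ↦ A × B` of pairs of 2×2 matrices into 4×4 matrices. -/
def emb (A B : M2R) : M4R :=
  Matrix.fromBlocks !![A 0 0, 0; 0, B 0 0] !![A 0 1, 0; 0, B 0 1]
                    !![A 1 0, 0; 0, B 1 0] !![A 1 1, 0; 0, B 1 1]

/-- `g• := g × 1` -/
def embUp (A : M2R) : M4R := emb A 1

/-- `g_• := 1 × g` -/
def embLow (B : M2R) : M4R := emb 1 B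

/-- `χ_{k,s}(g,Z) = j(g,Z)^{-k} |j(g,Z)|^{-2s}` -/
def chiF (k : ℤ) (s : ℂ) (g : M4R) (Z : M2C) : ℂ :=
  jfac g Z ^ (-k) * ((‖jfac g Z‖ : ℂ)) ^ (-(2 * s))

/-- `φ(Z) = τ + 2z + τ'` -/
def phiF (Z : M2C) : ℂ := Z 0 0 + 2 * Z 0 1 + Z 1 1

/-- `Φ_{k,s}(Z) = φ(Z)^{-k} |φ(Z)|^{-2s}` -/
def PhiF (k : ℤ) (s : ℂ) (Z : M2C) : ℂ :=
  phiF Z ^ (-k) * ((‖phiF Z‖ : ℂ)) ^ (-(2 * s))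

/-- The Petersson slash operator `(F|_k g)(Z) = j(g,Z)^{-k} F(g(Z))`. -/
def slashOp (k : ℤ) (g : M4R) (F : M2C → ℂ) (Z : M2C) : ℂ := jfac g Z ^ (-k) * F (smul4 g Z)

/-- The Siegel modular group as a type. -/
def Sp2ZT := {g : M4R // g ∈ Sp2Z}

/-- the left coset relation for `Γ_{2,0} \ Γ₂` -/
def rel20 (g g' : Sp2ZT) : Prop := ∃ γ ∈ Gamma20, g'.1 = γ * g.1

/-- `SL₂(ℤ)` as a type. -/
def SL2ZT := {g : M2R // g ∈ SL2Zset}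

/-- the left coset relation for `Γ_∞ \ Γ` -/
def relInf (g g' : SL2ZT) : Prop := ∃ γ ∈ GammaInf, g'.1 = γ * g.1

/-- a choice of representative of an equivalence class -/
def qout {α : Sort*} {r : α → α → Prop} (q : Quot r) : α := Classical.choose (Quot.exists_rep q)

/-- The real analytic Siegel Eisenstein series of degree 2:
`E_k^{(2)}(Z,s) = Σ_{g ∈ Γ_{2,0}\Γ₂} j(g,Z)^{-k} δ(g(Z))^s`. -/
def Eis (k : ℤ) (s : ℂ) (Z : M2C) : ℂ := ∑' q : Quot rel20, eisSummand k s (qout q).1 Z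

/-- `B_k(Z,s) = δ(Z)^s Σ_{g ∈ Γ} Φ_{k,s}(g_•(Z)) χ_{k,s}(g_•,Z)` -/
def Bk (k : ℤ) (s : ℂ) (W : M2C) : ℂ :=
  ((Hdelta W : ℂ)) ^ s * ∑' g : SL2ZT, PhiF k s (smul4 (embLow g.1) W) * chiF k s (embLow g.1) W

/-- `A_k(Z,s) = δ(Z)^s Σ_{g,h ∈ Γ_∞\Γ} χ_{k,s}(g• h_•, Z)` -/
def Ak (k : ℤ) (s : ℂ) (Z : M2C) : ℂ :=
  ((Hdelta Z : ℂ)) ^ s *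
    ∑' q : Quot relInf × Quot relInf, chiF k s (embUp (qout q.1).1 * embLow (qout q.2).1) Z

/-- The normalized Hecke operator `T_p` applied via the upper embedding `•`. -/
def TpUp (k : ℤ) (p : ℕ) (F : M2C → ℂ) (Z : M2C) : ℂ :=
  (p : ℂ) ^ ((k : ℂ) / 2 - 1) *
    (slashOp k (embUp (((p : ℝ) ^ (-(1:ℝ)/2)) • !![(p:ℝ), 0; 0, 1])) F Z +
      ∑ a : Fin p, slashOp k (embUp (((p : ℝ) ^ (-(1:ℝ)/2)) • !![1, ((a:ℕ):ℝ); 0, (p:ℝ)])) F Z)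

/-- The normalized Hecke operator `T_p` applied via the lower embedding `_•`. -/
def TpLow (k : ℤ) (p : ℕ) (F : M2C → ℂ) (Z : M2C) : ℂ :=
  (p : ℂ) ^ ((k : ℂ) / 2 - 1) *
    (slashOp k (embLow (((p : ℝ) ^ (-(1:ℝ)/2)) • !![(p:ℝ), 0; 0, 1])) F Z +
      ∑ a : Fin p, slashOp k (embLow (((p : ℝ) ^ (-(1:ℝ)/2)) • !![1, ((a:ℕ):ℝ); 0, (p:ℝ)])) F Z)

/-- `SL₂(ℤ)` as a set of rational matrices. -/
def SL2Qint : Set M2Q := {g | g.det = 1 ∧ ∀ i j, ∃ n : ℤ, g i j = (n : ℚ)}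

/-- the left coset `Γ g` in `GL₂(ℚ)` -/
def leftCosetQ (g : M2Q) : Set M2Q := {x | ∃ γ ∈ SL2Qint, x = γ * g}

/-- the double coset `Γ g Γ` in `GL₂(ℚ)` -/
def doubleCosetQ (g : M2Q) : Set M2Q := {x | ∃ γ₁ ∈ SL2Qint, ∃ γ₂ ∈ SL2Qint, x = γ₁ * g * γ₂}

/-- `d_m = [[m,0],[0,m⁻¹]]` -/
def dmQ (m : ℕ) : M2Q := !![(m:ℚ), 0; 0, (m:ℚ)⁻¹]

/-- entrywise coercion `ℚ → ℝ` -/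
def mapR (g : M2Q) : M2R := g.map (fun x => (x : ℝ))

/-- `γ 0, …, γ (r-1)` is a system of representatives for the left cosets of `Γ`
contained in the double coset `Γ d_m Γ`. -/
def IsRepSystem (m : ℕ) (r : ℕ) (γ : Fin r → M2Q) : Prop :=
  (∀ j, γ j ∈ doubleCosetQ (dmQ m)) ∧
  (⋃ j, leftCosetQ (γ j)) = doubleCosetQ (dmQ m) ∧
  (∀ j j', j ≠ j' → Disjoint (leftCosetQ (γ j)) (leftCosetQ (γ j')))

/-- the matrices `g_m` -/
def gmMat (m : ℕ) : M4R :=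
  Matrix.fromBlocks !![0,0;0,1] !![-1,0;0,0] !![1,(m:ℝ);0,0] !![0,0;-(m:ℝ),1]

/-- `J_m = [[0,1/m],[m,0]]` -/
def JmMat (m : ℕ) : M2R := !![0, 1/(m:ℝ); (m:ℝ), 0]

/-- `Γ(m) = {g ∈ Γ : J_m g J_m ∈ Γ}` -/
def GammaM (m : ℕ) : Set M2R := {g | g ∈ SL2Zset ∧ JmMat m * g * JmMat m ∈ SL2Zset}

/-- the left coset `Γ_{2,0} x` -/
def C20 (x : M4R) : Set M4R := {y | ∃ γ ∈ Gamma20, y = γ * x}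

/-- `g^# = [[d,b],[c,a]]` -/
def sharp (g : M2R) : M2R := !![g 1 1, g 0 1; g 1 0, g 0 0]

/-- half-integral symmetric matrix `[[n, r/2],[r/2, m]]` -/
def halfIntMat (n r m : ℤ) : M2R := !![(n:ℝ), (r:ℝ)/2; (r:ℝ)/2, (m:ℝ)]

def IsHalfIntegral (M : M2R) : Prop := ∃ n r m : ℤ, M = halfIntMat n r m

/-- `Z = X + iY` -/
def mkZ (X Y : M2R) : M2C := X.map (fun x => (x:ℂ)) + Complex.I • Y.map (fun x => (x:ℂ))

/-- `j([[a,b],[c,d]], τ) = cτ + d` on the upper half plane -/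
def jSL (g : M2R) (τ : ℂ) : ℂ := (g 1 0 : ℝ) * τ + ((g 1 1 : ℝ) : ℂ)

/-- the Möbius action of `GL₂⁺(ℝ)` on the upper half plane -/
def moeb (g : M2R) (τ : ℂ) : ℂ := (((g 0 0 : ℝ) : ℂ) * τ + ((g 0 1 : ℝ) : ℂ)) / (((g 1 0 : ℝ) : ℂ) * τ + ((g 1 1 : ℝ) : ℂ))

/-- the degree 1 real analytic Eisenstein series `E_k(τ,s) = Σ_{g ∈ Γ_∞\Γ} j(g,τ)^{-k} Im(g(τ))^s` -/
def E1 (k : ℤ) (s : ℂ) (τ : ℂ) : ℂ :=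
  ∑' q : Quot relInf, jSL (qout q).1 τ ^ (-k) * ((((moeb (qout q).1 τ).im : ℝ) : ℂ)) ^ s


set_option maxHeartbeats 1600000

namespace SSpf

lemma abs_exp_one {z : ℂ} (hz : z.re = 0) : ‖Complex.exp z‖ = 1 := by
  rw [Complex.norm_exp, hz, Real.exp_zero]

lemma re_two_pi_I_mul (w : ℂ) (hw : w.im = 0) : (2*(Real.pi:ℂ)*Complex.I*w).re = 0 := by
  simp [Complex.mul_re, Complex.mul_im, hw]

lemma norm_phase (w : ℂ) (hw : w.im = 0) : ‖Complex.exp (2*(Real.pi:ℂ)*Complex.I*w)‖ = 1 :=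
  abs_exp_one (re_two_pi_I_mul w hw)

lemma two_pi_I_ne_zero : (2*(Real.pi:ℂ)*Complex.I) ≠ 0 := by
  simp [Real.pi_ne_zero, Complex.I_ne_zero, Complex.ofReal_ne_zero, Complex.ext_iff]

/-- 1D uniqueness of Fourier coefficients. -/
lemma fourier1D (c : ℤ → ℂ) (hs : Summable fun n => ‖c n‖)
    (h : ∀ x : ℝ, HasSum (fun n : ℤ => c n * Complex.exp (2*(Real.pi:ℂ)*Complex.I*(n:ℂ)*(x:ℝ))) 0) :
    ∀ n, c n = 0 := by
  intro n₀
  set μ : MeasureTheory.Measure ℝ := MeasureTheory.volume.restrict (Set.Ioc (0:ℝ) 1) with hμ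
  set f : ℤ → ℝ → ℂ := fun n x => c n * Complex.exp (2*(Real.pi:ℂ)*Complex.I*((n:ℂ) - (n₀:ℂ))*(x:ℝ)) with hf
  have hsum : ∀ x : ℝ, HasSum (fun n => f n x) 0 := by
    intro x
    have h1 := (h x).mul_right (Complex.exp (-(2*(Real.pi:ℂ)*Complex.I*(n₀:ℂ)*(x:ℝ))))
    rw [zero_mul] at h1
    have heq : (fun n : ℤ => c n * Complex.exp (2*(Real.pi:ℂ)*Complex.I*(n:ℂ)*(x:ℝ)) *
        Complex.exp (-(2*(Real.pi:ℂ)*Complex.I*(n₀:ℂ)*(x:ℝ)))) = fun n => f n x := by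
      funext n
      rw [mul_assoc, ← Complex.exp_add]
      congr 1
      ring
    rwa [heq] at h1
  have hmeas : ∀ n : ℤ, MeasureTheory.AEStronglyMeasurable (f n) μ := by
    intro n
    apply Continuous.aestronglyMeasurable
    exact continuous_const.mul (Complex.continuous_exp.comp (continuous_const.mul Complex.continuous_ofReal))
  have hnorm : ∀ n x, ‖f n x‖ = ‖c n‖ := by
    intro n x
    rw [hf]
    simp only [norm_mul]
    rw [show (2*(Real.pi:ℂ)*Complex.I*((n:ℂ) - (n₀:ℂ))*(x:ℝ)) =
      2*(Real.pi:ℂ)*Complex.I*(((n:ℂ) - (n₀:ℂ))*(x:ℝ)) from by ring]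
    rw [norm_phase _ (by simp), mul_one]
  have hlint : ∀ n : ℤ, ∫⁻ x, ‖f n x‖₊ ∂μ = (‖c n‖₊ : ENNReal) := by
    intro n
    have : (fun x => (‖f n x‖₊ : ENNReal)) = fun _ => (‖c n‖₊ : ENNReal) := by
      funext x
      congr 1
      ext
      simp [coe_nnnorm, hnorm]
    rw [this, MeasureTheory.lintegral_const, hμ, MeasureTheory.Measure.restrict_apply MeasurableSet.univ,
      Set.univ_inter, Real.volume_Ioc]
    norm_num
  have hne : (∑' n : ℤ, ∫⁻ x, ‖f n x‖₊ ∂μ) ≠ ⊤ := by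
    simp_rw [hlint]
    rw [ENNReal.tsum_coe_ne_top_iff_summable]
    have : (fun n : ℤ => ‖c n‖₊) = fun n => (‖c n‖).toNNReal := by
      funext n; ext; simp [coe_nnnorm]
    rw [this]
    exact hs.toNNReal
  have key := MeasureTheory.integral_tsum hmeas hne
  have hL : (∫ x, ∑' n, f n x ∂μ) = 0 := by
    have : (fun x => ∑' n, f n x) = fun _ => (0:ℂ) := funext fun x => (hsum x).tsum_eq
    rw [this, MeasureTheory.integral_const]
    simp
  have hint : ∀ n : ℤ, (∫ x, f n x ∂μ) = if n = n₀ then c n₀ else 0 := by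
    intro n
    by_cases hn : n = n₀
    · subst hn
      rw [if_pos rfl]
      have : f n = fun _ => c n := by
        funext x; rw [hf]; simp
      rw [this, MeasureTheory.integral_const, hμ]
      rw [MeasureTheory.measureReal_restrict_apply MeasurableSet.univ, Set.univ_inter, Real.volume_real_Ioc]
      norm_num
    · rw [if_neg hn]
      have hC : (2*(Real.pi:ℂ)*Complex.I*((n:ℂ) - (n₀:ℂ))) ≠ 0 := by
        apply mul_ne_zero two_pi_I_ne_zero
        have : (n:ℂ) ≠ (n₀:ℂ) := by exact_mod_cast hn
        exact sub_ne_zero.mpr this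
      have : (∫ x, f n x ∂μ) = ∫ x in (0:ℝ)..1, c n * Complex.exp ((2*(Real.pi:ℂ)*Complex.I*((n:ℂ) - (n₀:ℂ))) * (x:ℝ)) := by
        rw [intervalIntegral.integral_of_le (by norm_num : (0:ℝ) ≤ 1)]
      rw [this, intervalIntegral.integral_const_mul, integral_exp_mul_complex hC]
      have h1 : Complex.exp (2*(Real.pi:ℂ)*Complex.I*((n:ℂ) - (n₀:ℂ)) * ((1:ℝ):ℂ)) = 1 := by
        have := Complex.exp_int_mul_two_pi_mul_I (n - n₀)
        rw [← this]
        congr 1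
        push_cast
        ring
      have h0 : Complex.exp (2*(Real.pi:ℂ)*Complex.I*((n:ℂ) - (n₀:ℂ)) * ((0:ℝ):ℂ)) = 1 := by
        norm_num
      rw [h1, h0]
      simp
  have hR : (∑' n : ℤ, ∫ x, f n x ∂μ) = c n₀ := by
    have : ∀ n : ℤ, n ≠ n₀ → (∫ x, f n x ∂μ) = 0 := by
      intro n hn; rw [hint n, if_neg hn]
    rw [tsum_eq_single n₀ this, hint n₀, if_pos rfl]
  rw [hL, hR] at key
  exact key.symm

/-- peel off one integer variable from a multi-variable Fourier expansion -/
lemma peel {β : Type*} {γ : Type*} (d : ℤ × β → ℂ) (φ : γ → β → ℂ)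
    (hφ : ∀ y b, ‖φ y b‖ = 1) (hd : Summable fun v => ‖d v‖)
    (h : ∀ (x : ℝ) (y : γ), HasSum
      (fun v : ℤ × β => d v * Complex.exp (2*(Real.pi:ℂ)*Complex.I*(v.1:ℂ)*(x:ℝ)) * φ y v.2) 0) :
    ∀ (n : ℤ) (y : γ), HasSum (fun b => d (n, b) * φ y b) 0 := by
  intro n₀ y
  have hnormfib : ∀ n : ℤ, Summable (fun b => ‖d (n, b) * φ y b‖) := by
    intro n
    have h2 := hd.prod_factor n
    have : (fun b => ‖d (n, b) * φ y b‖) = fun b => ‖d (n, b)‖ := by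
      funext b; rw [norm_mul, hφ, mul_one]
    rwa [this]
  have hfib : ∀ n : ℤ, Summable (fun b => d (n, b) * φ y b) := fun n =>
    Summable.of_norm (hnormfib n)
  set c : ℤ → ℂ := fun n => ∑' b, d (n, b) * φ y b with hc
  have hcs : Summable fun n => ‖c n‖ := by
    have hu : Summable fun n : ℤ => ∑' b, ‖d (n, b)‖ :=
      (hd.hasSum.prod_fiberwise (fun n => (hd.prod_factor n).hasSum)).summable
    refine Summable.of_nonneg_of_le (fun n => norm_nonneg _) (fun n => ?_) hu
    calc ‖c n‖ ≤ ∑' b, ‖d (n, b) * φ y b‖ := norm_tsum_le_tsum_norm (hnormfib n)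
      _ = ∑' b, ‖d (n, b)‖ := tsum_congr fun b => by rw [norm_mul, hφ, mul_one]
  have hhs : ∀ x : ℝ, HasSum (fun n : ℤ => c n * Complex.exp (2*(Real.pi:ℂ)*Complex.I*(n:ℂ)*(x:ℝ))) 0 := by
    intro x
    refine HasSum.prod_fiberwise (h x y) (fun n => ?_)
    have h3 := (hfib n).hasSum.mul_right (Complex.exp (2*(Real.pi:ℂ)*Complex.I*(n:ℂ)*(x:ℝ)))
    have heq : (fun b => d (n, b) * φ y b * Complex.exp (2*(Real.pi:ℂ)*Complex.I*(n:ℂ)*(x:ℝ)))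
        = fun b => d (n, b) * Complex.exp (2*(Real.pi:ℂ)*Complex.I*(n:ℂ)*(x:ℝ)) * φ y b := by
      funext b; ring
    rwa [heq] at h3
  have hzero := fourier1D c hcs hhs n₀
  have := (hfib n₀).hasSum
  rwa [show (∑' b, d (n₀, b) * φ y b) = 0 from hzero] at this

/-- 3D uniqueness of Fourier coefficients. -/
lemma fourier3D (d : ℤ × ℤ × ℤ → ℂ) (hd : Summable fun v => ‖d v‖)
    (h : ∀ x₁ x₂ x₃ : ℝ, HasSum (fun v : ℤ × ℤ × ℤ =>
      d v * Complex.exp (2*(Real.pi:ℂ)*Complex.I*((v.1:ℂ)*(x₁:ℝ) + (v.2.1:ℂ)*(x₂:ℝ) + (v.2.2:ℂ)*(x₃:ℝ)))) 0) :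
    ∀ v, d v = 0 := by
  rintro ⟨n, r, m⟩
  have H1 : ∀ (x : ℝ) (y : ℝ × ℝ), HasSum (fun v : ℤ × (ℤ × ℤ) =>
      d v * Complex.exp (2*(Real.pi:ℂ)*Complex.I*(v.1:ℂ)*(x:ℝ)) *
        Complex.exp (2*(Real.pi:ℂ)*Complex.I*((v.2.1:ℂ)*(y.1:ℝ) + (v.2.2:ℂ)*(y.2:ℝ)))) 0 := by
    intro x y
    have h4 := h x y.1 y.2
    have heq : (fun v : ℤ × ℤ × ℤ => d v * Complex.exp (2*(Real.pi:ℂ)*Complex.I*((v.1:ℂ)*(x:ℝ) + (v.2.1:ℂ)*(y.1:ℝ) + (v.2.2:ℂ)*(y.2:ℝ))))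
        = fun v : ℤ × (ℤ × ℤ) => d v * Complex.exp (2*(Real.pi:ℂ)*Complex.I*(v.1:ℂ)*(x:ℝ)) *
            Complex.exp (2*(Real.pi:ℂ)*Complex.I*((v.2.1:ℂ)*(y.1:ℝ) + (v.2.2:ℂ)*(y.2:ℝ))) := by
      funext v
      conv_rhs => rw [mul_assoc, ← Complex.exp_add]
      congr 2
      ring
    rwa [heq] at h4
  have step1 := peel (γ := ℝ × ℝ) d
      (fun y w => Complex.exp (2*(Real.pi:ℂ)*Complex.I*((w.1:ℂ)*(y.1:ℝ) + (w.2:ℂ)*(y.2:ℝ))))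
      (fun y w => norm_phase _ (by simp)) hd H1
  have H2 : ∀ (x : ℝ) (y : ℝ), HasSum (fun w : ℤ × ℤ =>
      d (n, w) * Complex.exp (2*(Real.pi:ℂ)*Complex.I*(w.1:ℂ)*(x:ℝ)) *
        Complex.exp (2*(Real.pi:ℂ)*Complex.I*(w.2:ℂ)*(y:ℝ))) 0 := by
    intro x y
    have h5 := step1 n (x, y)
    have heq : (fun w : ℤ × ℤ => d (n, w) * Complex.exp (2*(Real.pi:ℂ)*Complex.I*((w.1:ℂ)*(x:ℝ) + (w.2:ℂ)*(y:ℝ))))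
        = fun w : ℤ × ℤ => d (n, w) * Complex.exp (2*(Real.pi:ℂ)*Complex.I*(w.1:ℂ)*(x:ℝ)) *
            Complex.exp (2*(Real.pi:ℂ)*Complex.I*(w.2:ℂ)*(y:ℝ)) := by
      funext w
      conv_rhs => rw [mul_assoc, ← Complex.exp_add]
      congr 2
      ring
    rwa [heq] at h5
  have step2 := peel (γ := ℝ) (fun w : ℤ × ℤ => d (n, w))
      (fun x₃ mm => Complex.exp (2*(Real.pi:ℂ)*Complex.I*(mm:ℂ)*(x₃:ℝ)))
      (fun y b => by
        show ‖Complex.exp (2*(Real.pi:ℂ)*Complex.I*(b:ℂ)*(y:ℝ))‖ = 1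
        rw [show 2*(Real.pi:ℂ)*Complex.I*(b:ℂ)*(y:ℝ) = 2*(Real.pi:ℂ)*Complex.I*((b:ℂ)*(y:ℝ)) from by ring]
        exact norm_phase _ (by simp)) (hd.prod_factor n) H2
  exact fourier1D (fun mm => d (n, r, mm)) ((hd.prod_factor n).prod_factor r) (fun x => step2 r x) m

end SSpf
namespace SSpf


lemma posDef_mk (a b c : ℝ) (ha : 0 < a) (h : b*b < a*c) : (!![a,b;b,c] : M2R).PosDef := by
  rw [Matrix.posDef_iff_dotProduct_mulVec]
  constructor
  · ext i j
    fin_cases i <;> fin_cases j <;> simp [Matrix.conjTranspose_apply]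
  · intro x hx
    have hexp : star x ⬝ᵥ (!![a,b;b,c] : M2R).mulVec x
        = a*(x 0)*(x 0) + 2*b*(x 0)*(x 1) + c*(x 1)*(x 1) := by
      simp [dotProduct, Matrix.mulVec, Fin.sum_univ_two]
      ring
    rw [hexp]
    by_cases h1 : x 1 = 0
    · have h0 : x 0 ≠ 0 := by
        intro h0
        apply hx
        funext i
        fin_cases i
        · exact h0
        · exact h1
      rw [h1]
      have : 0 < x 0 * x 0 := mul_self_pos.mpr h0
      nlinarith
    · have hx1 : 0 < x 1 * x 1 := mul_self_pos.mpr h1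
      nlinarith [sq_nonneg (a*(x 0) + b*(x 1)), mul_pos (sub_pos.mpr h) hx1]

lemma posDef_elim {a b c : ℝ} (h : (!![a,b;b,c] : M2R).PosDef) :
    0 < a ∧ 0 < c ∧ b*b < a*c := by
  have hdet := h.det_pos
  rw [Matrix.det_fin_two_of] at hdet
  have h0 := h.dotProduct_mulVec_pos (x := ![1,0]) (by
    intro hcon
    have := congrFun hcon 0
    norm_num at this)
  have h1 := h.dotProduct_mulVec_pos (x := ![0,1]) (by
    intro hcon
    have := congrFun hcon 1
    norm_num at this)
  simp [dotProduct, Matrix.mulVec, Fin.sum_univ_two] at h0 h1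
  exact ⟨by linarith, by linarith, by linarith⟩

lemma isSymm_two (a b c : ℝ) : (!![a,b;b,c] : M2R).IsSymm := by
  rw [Matrix.IsSymm]
  ext i j
  fin_cases i <;> fin_cases j <;> simp

lemma mkZ_apply (X Y : M2R) (i j : Fin 2) :
    mkZ X Y i j = (X i j : ℂ) + (Y i j : ℂ) * Complex.I := by
  simp [mkZ, Matrix.add_apply, Matrix.map_apply]
  ring

lemma ImM_mkZ (X Y : M2R) : ImM (mkZ X Y) = Y := by
  ext i j
  simp [ImM, Matrix.map_apply, mkZ_apply]

lemma mkZ_mem (X Y : M2R) (hX : X.IsSymm) (hY : Y.IsSymm) (hYpd : Y.PosDef) :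
    mkZ X Y ∈ SiegelH2 := by
  constructor
  · rw [Matrix.IsSymm]
    ext i j
    rw [Matrix.transpose_apply, mkZ_apply, mkZ_apply, hX.apply, hY.apply]
  · rw [ImM_mkZ]
    exact hYpd

lemma eq_mkZ {Z : M2C} (hZ : Z ∈ SiegelH2) : Z = mkZ (Z.map Complex.re) (ImM Z) := by
  ext i j
  rw [mkZ_apply]
  simp [ImM, Matrix.map_apply]

/-- entries of half integral matrices -/
lemma not_halfIntegral_up {p : ℕ} (hp : (p:ℝ) ≠ 0) (N R M : ℤ)
    (h : ¬((p:ℤ) ∣ N ∧ (p:ℤ) ∣ R)) :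
    ¬ IsHalfIntegral !![(N:ℝ)/(p:ℝ), (R:ℝ)/(2*(p:ℝ)); (R:ℝ)/(2*(p:ℝ)), (M:ℝ)] := by
  rintro ⟨n, r, m, heq⟩
  rw [halfIntMat] at heq
  have h00 := congrFun (congrFun heq 0) 0
  have h01 := congrFun (congrFun heq 0) 1
  norm_num [Matrix.cons_val_zero, Matrix.cons_val_one] at h00 h01
  apply h
  constructor
  · refine ⟨n, ?_⟩
    have : (N:ℝ) = ((p * n : ℤ) : ℝ) := by
      push_cast
      rw [div_eq_iff hp] at h00
      linarith
    exact_mod_cast this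
  · refine ⟨r, ?_⟩
    have : (R:ℝ) = ((p * r : ℤ) : ℝ) := by
      push_cast
      rw [div_eq_div_iff (by positivity) (by norm_num : (2:ℝ) ≠ 0)] at h01
      linarith
    exact_mod_cast this

lemma not_halfIntegral_low {p : ℕ} (hp : (p:ℝ) ≠ 0) (N R M : ℤ)
    (h : ¬((p:ℤ) ∣ R ∧ (p:ℤ) ∣ M)) :
    ¬ IsHalfIntegral !![(N:ℝ), (R:ℝ)/(2*(p:ℝ)); (R:ℝ)/(2*(p:ℝ)), (M:ℝ)/(p:ℝ)] := by
  rintro ⟨n, r, m, heq⟩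
  rw [halfIntMat] at heq
  have h01 := congrFun (congrFun heq 0) 1
  have h11 := congrFun (congrFun heq 1) 1
  norm_num [Matrix.cons_val_zero, Matrix.cons_val_one] at h01 h11
  apply h
  constructor
  · refine ⟨r, ?_⟩
    have : (R:ℝ) = ((p * r : ℤ) : ℝ) := by
      push_cast
      rw [div_eq_div_iff (by positivity) (by norm_num : (2:ℝ) ≠ 0)] at h01
      linarith
    exact_mod_cast this
  · refine ⟨m, ?_⟩
    have : (M:ℝ) = ((p * m : ℤ) : ℝ) := by
      push_cast
      rw [div_eq_iff hp] at h11
      linarith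
    exact_mod_cast this

/-- the character sum -/
lemma charSum (p : ℕ) (hp : 0 < p) (n : ℤ) :
    ∑ a : Fin p, Complex.exp (2*(Real.pi:ℂ)*Complex.I*((n:ℂ)*((a:ℕ):ℂ)/(p:ℂ)))
      = if (p:ℤ) ∣ n then (p:ℂ) else 0 := by
  have hp0 : (p:ℂ) ≠ 0 := by exact_mod_cast hp.ne'
  have hterm : ∀ a : ℕ, Complex.exp (2*(Real.pi:ℂ)*Complex.I*((n:ℂ)*(a:ℂ)/(p:ℂ)))
      = Complex.exp (2*(Real.pi:ℂ)*Complex.I*(n:ℂ)/(p:ℂ)) ^ a := by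
    intro a
    rw [← Complex.exp_nat_mul]
    congr 1
    ring
  rw [Fin.sum_univ_eq_sum_range (fun a => Complex.exp (2*(Real.pi:ℂ)*Complex.I*((n:ℂ)*(a:ℂ)/(p:ℂ)))) p]
  simp_rw [hterm]
  by_cases hdvd : (p:ℤ) ∣ n
  · obtain ⟨t, rfl⟩ := hdvd
    have hone : Complex.exp (2*(Real.pi:ℂ)*Complex.I*((((p:ℤ)*t : ℤ)):ℂ)/(p:ℂ)) = 1 := by
      rw [show 2*(Real.pi:ℂ)*Complex.I*((((p:ℤ)*t : ℤ)):ℂ)/(p:ℂ) = (t:ℂ)*(2*(Real.pi:ℂ)*Complex.I) from by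
        push_cast
        field_simp]
      exact Complex.exp_int_mul_two_pi_mul_I t
    rw [if_pos ⟨t, rfl⟩]
    simp only [hone, one_pow, Finset.sum_const, Finset.card_range, nsmul_eq_mul, mul_one]
  · have hne1 : Complex.exp (2*(Real.pi:ℂ)*Complex.I*(n:ℂ)/(p:ℂ)) ≠ 1 := by
      intro heq
      rw [Complex.exp_eq_one_iff] at heq
      obtain ⟨t, ht⟩ := heq
      apply hdvd
      refine ⟨t, ?_⟩
      have hnc : (n:ℂ) = ((p:ℤ)*t : ℤ) := by
        push_cast
        apply mul_left_cancel₀ two_pi_I_ne_zero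
        rw [div_eq_iff hp0] at ht
        rw [show 2*(Real.pi:ℂ)*Complex.I*((p:ℂ)*(t:ℂ)) = (t:ℂ)*(2*(Real.pi:ℂ)*Complex.I)*(p:ℂ) from by ring]
        exact ht
      exact_mod_cast hnc
    rw [geom_sum_eq hne1, if_neg hdvd]
    have hPow : Complex.exp (2*(Real.pi:ℂ)*Complex.I*(n:ℂ)/(p:ℂ)) ^ p = 1 := by
      rw [← Complex.exp_nat_mul]
      rw [show (p:ℂ) * (2*(Real.pi:ℂ)*Complex.I*(n:ℂ)/(p:ℂ)) = (n:ℂ)*(2*(Real.pi:ℂ)*Complex.I) from by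
        field_simp]
      exact Complex.exp_int_mul_two_pi_mul_I n
    rw [hPow]
    simp

end SSpf
namespace SSpf

lemma emb_block11 (A B : M2R) : (mapC (emb A B)).toBlocks₁₁ = !![(A 0 0 :ℂ), 0; 0, (B 0 0:ℂ)] := by
  rw [emb, mapC, Matrix.fromBlocks_map, Matrix.toBlocks_fromBlocks₁₁]
  ext i j
  fin_cases i <;> fin_cases j <;> simp [Matrix.map_apply]

lemma emb_block12 (A B : M2R) : (mapC (emb A B)).toBlocks₁₂ = !![(A 0 1 :ℂ), 0; 0, (B 0 1:ℂ)] := by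
  rw [emb, mapC, Matrix.fromBlocks_map, Matrix.toBlocks_fromBlocks₁₂]
  ext i j
  fin_cases i <;> fin_cases j <;> simp [Matrix.map_apply]

lemma emb_block21 (A B : M2R) : (mapC (emb A B)).toBlocks₂₁ = !![(A 1 0 :ℂ), 0; 0, (B 1 0:ℂ)] := by
  rw [emb, mapC, Matrix.fromBlocks_map, Matrix.toBlocks_fromBlocks₂₁]
  ext i j
  fin_cases i <;> fin_cases j <;> simp [Matrix.map_apply]

lemma emb_block22 (A B : M2R) : (mapC (emb A B)).toBlocks₂₂ = !![(A 1 1 :ℂ), 0; 0, (B 1 1:ℂ)] := by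
  rw [emb, mapC, Matrix.fromBlocks_map, Matrix.toBlocks_fromBlocks₂₂]
  ext i j
  fin_cases i <;> fin_cases j <;> simp [Matrix.map_apply]

lemma jfac_emb (A B : M2R) (hA : A 1 0 = 0) (hB : B 1 0 = 0) (Z : M2C) :
    jfac (emb A B) Z = ((A 1 1 : ℝ) : ℂ) * ((B 1 1 : ℝ) : ℂ) := by
  rw [jfac, emb_block21, emb_block22, hA, hB]
  have hz : (!![((0:ℝ):ℂ), 0; 0, ((0:ℝ):ℂ)] : M2C) = 0 := by
    ext i j; fin_cases i <;> fin_cases j <;> simp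
  rw [hz, Matrix.zero_mul, zero_add, Matrix.det_fin_two_of]
  ring

lemma smul4_emb (A B : M2R) (hA : A 1 0 = 0) (hB : B 1 0 = 0)
    (hdA : A 0 0 * A 1 1 = 1) (hdB : B 0 0 * B 1 1 = 1) (Z : M2C) :
    smul4 (emb A B) Z =
      !![((A 0 0 : ℝ) * Z 0 0 + (A 0 1 : ℝ)) * (A 0 0 : ℝ),
         (A 0 0 : ℝ) * (B 0 0 : ℝ) * Z 0 1;
         (A 0 0 : ℝ) * (B 0 0 : ℝ) * Z 1 0,
         ((B 0 0 : ℝ) * Z 1 1 + (B 0 1 : ℝ)) * (B 0 0 : ℝ)] := by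
  rw [smul4, emb_block11, emb_block12, emb_block21, emb_block22, hA, hB]
  have hz : (!![((0:ℝ):ℂ), 0; 0, ((0:ℝ):ℂ)] : M2C) = 0 := by
    ext i j; fin_cases i <;> fin_cases j <;> simp
  rw [hz, Matrix.zero_mul, zero_add]
  have hinv : (!![(A 1 1 : ℂ), 0; 0, (B 1 1 : ℂ)] : M2C)⁻¹ = !![(A 0 0 : ℂ), 0; 0, (B 0 0 : ℂ)] := by
    apply Matrix.inv_eq_right_inv
    have e1 : (A 1 1 : ℂ) * (A 0 0 : ℂ) = 1 := by
      rw [← Complex.ofReal_mul]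
      norm_cast
      linarith [hdA]
    have e2 : (B 1 1 : ℂ) * (B 0 0 : ℂ) = 1 := by
      rw [← Complex.ofReal_mul]
      norm_cast
      linarith [hdB]
    ext i j
    fin_cases i <;> fin_cases j <;>
      simp [Matrix.mul_apply, Fin.sum_univ_two, Matrix.one_apply, e1, e2]
  rw [hinv]
  ext i j
  fin_cases i <;> fin_cases j <;>
    simp only [Matrix.mul_apply, Matrix.add_apply, Fin.sum_univ_two, Matrix.of_apply, Matrix.cons_val_zero,
      Matrix.cons_val_one, Matrix.head_cons, Matrix.cons_val', Matrix.head_fin_const,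
      Matrix.empty_val', Matrix.cons_val_fin_one, Fin.isValue, Fin.mk_zero, Fin.mk_one] <;>
    ring

end SSpf
namespace SSpf

lemma hasSum_TpUp
    (k : ℤ) (hk : Even k)
    (F : M2C → ℂ) (A : M2R → M2R → ℂ)
    (hA0 : ∀ M Y : M2R, ¬ IsHalfIntegral M → A M Y = 0)
    (hFour : ∀ X Y : M2R, X.IsSymm → Y.IsSymm → Y.PosDef →
      HasSum (fun c : ℤ × ℤ × ℤ =>
        A (halfIntMat c.1 c.2.1 c.2.2) Y *
          Complex.exp (2 * (Real.pi : ℂ) * Complex.I *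
            ((c.1 : ℂ) * X 0 0 + (c.2.1 : ℂ) * X 0 1 + (c.2.2 : ℂ) * X 1 1)))
        (F (mkZ X Y)))
    (p : ℕ) (hp : p.Prime) (x₁ x₂ x₃ y₁ y₂ y₃ : ℝ)
    (hY : (!![y₁, Real.sqrt p * y₂; Real.sqrt p * y₂, y₃] : M2R).PosDef) :
    HasSum (fun v : ℤ × ℤ × ℤ =>
      ((p:ℂ)^(k-1) * A !![(v.1:ℝ)/(p:ℝ), (v.2.1:ℝ)/(2*(p:ℝ)); (v.2.1:ℝ)/(2*(p:ℝ)), (v.2.2:ℝ)]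
          !![(p:ℝ)*y₁, (p:ℝ)*y₂; (p:ℝ)*y₂, y₃]
        + A !![(p:ℝ)*(v.1:ℝ), (v.2.1:ℝ)/2; (v.2.1:ℝ)/2, (v.2.2:ℝ)] !![y₁/(p:ℝ), y₂; y₂, y₃])
      * Complex.exp (2*(Real.pi:ℂ)*Complex.I*((v.1:ℂ)*(x₁:ℝ) + (v.2.1:ℂ)*(x₂:ℝ) + (v.2.2:ℂ)*(x₃:ℝ))))
    (TpUp k p F (mkZ !![x₁, Real.sqrt p * x₂; Real.sqrt p * x₂, x₃]
       !![y₁, Real.sqrt p * y₂; Real.sqrt p * y₂, y₃])) := by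
  obtain ⟨jj, hjj⟩ := hk
  have hppos : (0:ℝ) < p := by exact_mod_cast hp.pos
  have hpR : (p:ℝ) ≠ 0 := hppos.ne'
  have hpC : (p:ℂ) ≠ 0 := by exact_mod_cast hpR
  have hpZ : (p:ℤ) ≠ 0 := by exact_mod_cast hp.pos.ne'
  set s := Real.sqrt p with hsdef
  have hs0 : 0 < s := Real.sqrt_pos.mpr hppos
  have hsne : s ≠ 0 := hs0.ne'
  have hs2 : s^2 = (p:ℝ) := Real.sq_sqrt hppos.le
  have hσ2 : ((s:ℝ):ℂ)^2 = (p:ℂ) := by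
    rw [← Complex.ofReal_pow, hs2]
    norm_cast
  have hσne : ((s:ℝ):ℂ) ≠ 0 := by exact_mod_cast hsne
  obtain ⟨hy₁, hy₃, hy₂⟩ := posDef_elim hY
  -- hy₂ : (s*y₂)*(s*y₂) < y₁*y₃, i.e. p*y₂^2 < y₁*y₃
  have hpy : (p:ℝ)*(y₂*y₂) < y₁*y₃ := by nlinarith [hs2]
  have hr : ((p:ℝ) ^ (-(1:ℝ)/2)) = s⁻¹ := by
    rw [show (-(1:ℝ)/2) = -(1/2) from by ring, Real.rpow_neg hppos.le, ← Real.sqrt_eq_rpow]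
  set Z := mkZ !![x₁, s * x₂; s * x₂, x₃] !![y₁, s * y₂; s * y₂, y₃] with hZdef
  have hZ00 : Z 0 0 = ((x₁:ℝ):ℂ) + ((y₁:ℝ):ℂ)*Complex.I := by
    rw [hZdef, mkZ_apply]; norm_num
  have hZ01 : Z 0 1 = ((s*x₂:ℝ):ℂ) + ((s*y₂:ℝ):ℂ)*Complex.I := by
    rw [hZdef, mkZ_apply]; norm_num
  have hZ10 : Z 1 0 = ((s*x₂:ℝ):ℂ) + ((s*y₂:ℝ):ℂ)*Complex.I := by
    rw [hZdef, mkZ_apply]; norm_num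
  have hZ11 : Z 1 1 = ((x₃:ℝ):ℂ) + ((y₃:ℝ):ℂ)*Complex.I := by
    rw [hZdef, mkZ_apply]; norm_num
  -- the infinity matrix
  set Ainf : M2R := ((p:ℝ) ^ (-(1:ℝ)/2)) • !![(p:ℝ), 0; 0, 1] with hAinfdef
  have hAinf00 : Ainf 0 0 = s := by
    rw [hAinfdef, Matrix.smul_apply, hr]; norm_num
    rw [← hs2]; field_simp
  have hAinf01 : Ainf 0 1 = 0 := by rw [hAinfdef, Matrix.smul_apply]; norm_num
  have hAinf10 : Ainf 1 0 = 0 := by rw [hAinfdef, Matrix.smul_apply]; norm_num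
  have hAinf11 : Ainf 1 1 = s⁻¹ := by rw [hAinfdef, Matrix.smul_apply, hr]; norm_num
  have h1_10 : (1 : M2R) 1 0 = 0 := by norm_num [Matrix.one_apply]
  have h1_00 : (1 : M2R) 0 0 = 1 := by norm_num [Matrix.one_apply]
  have h1_01 : (1 : M2R) 0 1 = 0 := by norm_num [Matrix.one_apply]
  have h1_11 : (1 : M2R) 1 1 = 1 := by norm_num [Matrix.one_apply]
  have hdetinf : Ainf 0 0 * Ainf 1 1 = 1 := by rw [hAinf00, hAinf11]; field_simp
  have hdet1 : (1:M2R) 0 0 * (1:M2R) 1 1 = 1 := by rw [h1_00, h1_11]; norm_num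
  have hWinf : smul4 (embUp Ainf) Z
      = mkZ !![(p:ℝ)*x₁, (p:ℝ)*x₂; (p:ℝ)*x₂, x₃] !![(p:ℝ)*y₁, (p:ℝ)*y₂; (p:ℝ)*y₂, y₃] := by
    rw [embUp, smul4_emb Ainf 1 hAinf10 h1_10 hdetinf hdet1]
    ext i j
    fin_cases i <;> fin_cases j <;>
      simp only [mkZ_apply, hAinf00, hAinf01, hAinf10, hAinf11, h1_00, h1_01, h1_10, h1_11,
        hZ00, hZ01, hZ10, hZ11, Matrix.of_apply, Matrix.cons_val_zero, Matrix.cons_val_one,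
        Matrix.head_cons, Matrix.cons_val', Matrix.head_fin_const, Matrix.empty_val',
        Matrix.cons_val_fin_one, Fin.isValue, Fin.mk_zero, Fin.mk_one] <;>
      (push_cast; (try rw [← hσ2]); (try field_simp); (try ring))
  have hjinf : jfac (embUp Ainf) Z = ((s⁻¹ : ℝ):ℂ) := by
    rw [embUp, jfac_emb Ainf 1 hAinf10 h1_10, hAinf11, h1_11]
    norm_num
  -- the a matrices
  have hAa00 : ∀ a : Fin p, (((p:ℝ) ^ (-(1:ℝ)/2)) • !![1, ((a:ℕ):ℝ); 0, (p:ℝ)] : M2R) 0 0 = s⁻¹ := by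
    intro a; rw [Matrix.smul_apply, hr]; norm_num
  have hAa01 : ∀ a : Fin p, (((p:ℝ) ^ (-(1:ℝ)/2)) • !![1, ((a:ℕ):ℝ); 0, (p:ℝ)] : M2R) 0 1 = s⁻¹ * ((a:ℕ):ℝ) := by
    intro a; rw [Matrix.smul_apply, hr]; norm_num
  have hAa10 : ∀ a : Fin p, (((p:ℝ) ^ (-(1:ℝ)/2)) • !![1, ((a:ℕ):ℝ); 0, (p:ℝ)] : M2R) 1 0 = 0 := by
    intro a; rw [Matrix.smul_apply]; norm_num
  have hAa11 : ∀ a : Fin p, (((p:ℝ) ^ (-(1:ℝ)/2)) • !![1, ((a:ℕ):ℝ); 0, (p:ℝ)] : M2R) 1 1 = s := by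
    intro a; rw [Matrix.smul_apply, hr]; norm_num
    rw [← hs2]; field_simp
  have hdeta : ∀ a : Fin p, (((p:ℝ) ^ (-(1:ℝ)/2)) • !![1, ((a:ℕ):ℝ); 0, (p:ℝ)] : M2R) 0 0 *
      (((p:ℝ) ^ (-(1:ℝ)/2)) • !![1, ((a:ℕ):ℝ); 0, (p:ℝ)] : M2R) 1 1 = 1 := by
    intro a; rw [hAa00 a, hAa11 a]; field_simp
  have hWa : ∀ a : Fin p, smul4 (embUp (((p:ℝ) ^ (-(1:ℝ)/2)) • !![1, ((a:ℕ):ℝ); 0, (p:ℝ)])) Z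
      = mkZ !![(x₁+((a:ℕ):ℝ))/(p:ℝ), x₂; x₂, x₃] !![y₁/(p:ℝ), y₂; y₂, y₃] := by
    intro a
    rw [embUp, smul4_emb _ 1 (hAa10 a) h1_10 (hdeta a) hdet1]
    ext i j
    fin_cases i <;> fin_cases j <;>
      simp only [mkZ_apply, hAa00 a, hAa01 a, hAa10 a, hAa11 a, h1_00, h1_01, h1_10, h1_11,
        hZ00, hZ01, hZ10, hZ11, Matrix.of_apply, Matrix.cons_val_zero, Matrix.cons_val_one,
        Matrix.head_cons, Matrix.cons_val', Matrix.head_fin_const, Matrix.empty_val',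
        Matrix.cons_val_fin_one, Fin.isValue, Fin.mk_zero, Fin.mk_one] <;>
      (push_cast; (try rw [← hσ2]); (try field_simp); (try ring))
  have hja : ∀ a : Fin p, jfac (embUp (((p:ℝ) ^ (-(1:ℝ)/2)) • !![1, ((a:ℕ):ℝ); 0, (p:ℝ)])) Z
      = ((s : ℝ):ℂ) := by
    intro a
    rw [embUp, jfac_emb _ 1 (hAa10 a) h1_10, hAa11 a, h1_11]
    norm_num
  -- power arithmetic
  have hσk : ((s:ℝ):ℂ)^k = (p:ℂ)^jj := by
    rw [hjj, ← two_mul, _root_.zpow_mul, ← hσ2, _root_.zpow_two, pow_two]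
  have hcp : (p:ℂ)^((k:ℂ)/2 - 1) = (p:ℂ)^(jj-1) := by
    rw [show ((k:ℂ)/2 - 1) = ((jj - 1 : ℤ) : ℂ) from by rw [hjj]; push_cast; ring,
      Complex.cpow_intCast]
  have h1pow : (((s⁻¹:ℝ)):ℂ)^(-k) = (p:ℂ)^jj := by
    rw [Complex.ofReal_inv, _root_.inv_zpow, ← _root_.zpow_neg, neg_neg, hσk]
  have h2pow : (((s:ℝ)):ℂ)^(-k) = ((p:ℂ)^jj)⁻¹ := by
    rw [_root_.zpow_neg, hσk]
  -- the trace formula for TpUp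
  have hTp : TpUp k p F Z = (p:ℂ)^(k-1) *
        F (mkZ !![(p:ℝ)*x₁, (p:ℝ)*x₂; (p:ℝ)*x₂, x₃] !![(p:ℝ)*y₁, (p:ℝ)*y₂; (p:ℝ)*y₂, y₃])
      + (p:ℂ)⁻¹ * ∑ a : Fin p, F (mkZ !![(x₁+((a:ℕ):ℝ))/(p:ℝ), x₂; x₂, x₃] !![y₁/(p:ℝ), y₂; y₂, y₃]) := by
    rw [TpUp]
    have hterm : ∀ a : Fin p,
        slashOp k (embUp (((p:ℝ) ^ (-(1:ℝ)/2)) • !![1, ((a:ℕ):ℝ); 0, (p:ℝ)])) F Z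
        = ((s:ℝ):ℂ)^(-k) * F (mkZ !![(x₁+((a:ℕ):ℝ))/(p:ℝ), x₂; x₂, x₃] !![y₁/(p:ℝ), y₂; y₂, y₃]) := by
      intro a
      rw [slashOp, hja a, hWa a]
    rw [Finset.sum_congr rfl (fun a _ => hterm a), slashOp, hjinf, hWinf, ← Finset.mul_sum]
    rw [hcp, h1pow, h2pow, mul_add, ← mul_assoc, ← mul_assoc, ← _root_.zpow_add₀ hpC,
      show jj - 1 + jj = k - 1 from by omega,
      show (p:ℂ)^(jj-1) * ((p:ℂ)^jj)⁻¹ = (p:ℂ)⁻¹ from by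
        rw [← _root_.zpow_neg (p:ℂ) jj, ← _root_.zpow_add₀ hpC,
          show jj - 1 + -jj = -1 from by omega, _root_.zpow_neg_one]]
  -- first summand: the infinity term
  have hpd1 : (!![(p:ℝ)*y₁, (p:ℝ)*y₂; (p:ℝ)*y₂, y₃] : M2R).PosDef := by
    apply posDef_mk
    · positivity
    · nlinarith
  have hinfty := (hFour !![(p:ℝ)*x₁, (p:ℝ)*x₂; (p:ℝ)*x₂, x₃] !![(p:ℝ)*y₁, (p:ℝ)*y₂; (p:ℝ)*y₂, y₃]
    (isSymm_two _ _ _) (isSymm_two _ _ _) hpd1).mul_left ((p:ℂ)^(k-1))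
  set f1 : ℤ × ℤ × ℤ → ℂ := fun v =>
    (p:ℂ)^(k-1) * A !![(v.1:ℝ)/(p:ℝ), (v.2.1:ℝ)/(2*(p:ℝ)); (v.2.1:ℝ)/(2*(p:ℝ)), (v.2.2:ℝ)]
        !![(p:ℝ)*y₁, (p:ℝ)*y₂; (p:ℝ)*y₂, y₃]
      * Complex.exp (2*(Real.pi:ℂ)*Complex.I*((v.1:ℂ)*(x₁:ℝ) + (v.2.1:ℂ)*(x₂:ℝ) + (v.2.2:ℂ)*(x₃:ℝ)))
    with hf1def
  set ι₁ : ℤ × ℤ × ℤ → ℤ × ℤ × ℤ := fun v => ((p:ℤ)*v.1, (p:ℤ)*v.2.1, v.2.2) with hι₁def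
  have hinj1 : Function.Injective ι₁ := by
    intro a b hab
    rw [hι₁def] at hab
    simp only [Prod.mk.injEq] at hab
    obtain ⟨e1, e2, e3⟩ := hab
    have := mul_left_cancel₀ hpZ e1
    have := mul_left_cancel₀ hpZ e2
    ext <;> simp_all
  have hcomp1 : (fun c : ℤ × ℤ × ℤ =>
      (p:ℂ)^(k-1) * (A (halfIntMat c.1 c.2.1 c.2.2) !![(p:ℝ)*y₁, (p:ℝ)*y₂; (p:ℝ)*y₂, y₃] *
        Complex.exp (2 * (Real.pi : ℂ) * Complex.I *
          ((c.1 : ℂ) * ((!![(p:ℝ)*x₁, (p:ℝ)*x₂; (p:ℝ)*x₂, x₃] : M2R) 0 0 : ℝ)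
           + (c.2.1 : ℂ) * ((!![(p:ℝ)*x₁, (p:ℝ)*x₂; (p:ℝ)*x₂, x₃] : M2R) 0 1 : ℝ)
           + (c.2.2 : ℂ) * ((!![(p:ℝ)*x₁, (p:ℝ)*x₂; (p:ℝ)*x₂, x₃] : M2R) 1 1 : ℝ)))))
      = f1 ∘ ι₁ := by
    funext c
    simp only [Function.comp_apply, hι₁def, hf1def]
    simp only [Matrix.of_apply, Matrix.cons_val_zero, Matrix.cons_val_one, Matrix.head_cons,
      Matrix.cons_val', Matrix.head_fin_const, Matrix.empty_val', Matrix.cons_val_fin_one,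
      Fin.isValue]
    rw [← mul_assoc]
    have hM : (!![((((p:ℤ)*c.1 : ℤ)):ℝ)/(p:ℝ), ((((p:ℤ)*c.2.1 : ℤ)):ℝ)/(2*(p:ℝ));
        ((((p:ℤ)*c.2.1 : ℤ)):ℝ)/(2*(p:ℝ)), ((c.2.2:ℤ):ℝ)] : M2R)
        = halfIntMat c.1 c.2.1 c.2.2 := by
      rw [halfIntMat]
      ext i j
      fin_cases i <;> fin_cases j <;>
        (simp only [Matrix.of_apply, Matrix.cons_val_zero, Matrix.cons_val_one, Matrix.head_cons,
          Matrix.cons_val', Matrix.head_fin_const, Matrix.empty_val', Matrix.cons_val_fin_one,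
          Fin.isValue, Fin.mk_zero, Fin.mk_one]) <;>
        (push_cast; (try field_simp); (try ring))
    rw [hM]
    congr 1
    congr 1
    push_cast
    ring
  have hvan1 : ∀ v ∉ Set.range ι₁, f1 v = 0 := by
    intro v hv
    have hnd : ¬((p:ℤ) ∣ v.1 ∧ (p:ℤ) ∣ v.2.1) := by
      rintro ⟨⟨n', hn'⟩, ⟨r', hr'⟩⟩
      exact hv ⟨(n', r', v.2.2), by rw [hι₁def]; simp [← hn', ← hr']⟩
    simp only [hf1def]
    have := hA0 _ !![(p:ℝ)*y₁, (p:ℝ)*y₂; (p:ℝ)*y₂, y₃]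
      (not_halfIntegral_up hpR v.1 v.2.1 v.2.2 hnd)
    simp only [this, mul_zero, zero_mul]
  rw [hcomp1] at hinfty
  have hs1 : HasSum f1 ((p:ℂ)^(k-1) *
      F (mkZ !![(p:ℝ)*x₁, (p:ℝ)*x₂; (p:ℝ)*x₂, x₃] !![(p:ℝ)*y₁, (p:ℝ)*y₂; (p:ℝ)*y₂, y₃])) :=
    (hinj1.hasSum_iff hvan1).mp hinfty
  -- second summand: the a-sum
  have hpd2 : (!![y₁/(p:ℝ), y₂; y₂, y₃] : M2R).PosDef := by
    apply posDef_mk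
    · positivity
    · rw [div_mul_eq_mul_div, lt_div_iff₀ hppos]
      nlinarith
  have hAterm : ∀ a : Fin p, HasSum (fun c : ℤ × ℤ × ℤ =>
      A (halfIntMat c.1 c.2.1 c.2.2) !![y₁/(p:ℝ), y₂; y₂, y₃] *
        Complex.exp (2 * (Real.pi : ℂ) * Complex.I *
          ((c.1 : ℂ) * ((!![(x₁+((a:ℕ):ℝ))/(p:ℝ), x₂; x₂, x₃] : M2R) 0 0 : ℝ)
           + (c.2.1 : ℂ) * ((!![(x₁+((a:ℕ):ℝ))/(p:ℝ), x₂; x₂, x₃] : M2R) 0 1 : ℝ)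
           + (c.2.2 : ℂ) * ((!![(x₁+((a:ℕ):ℝ))/(p:ℝ), x₂; x₂, x₃] : M2R) 1 1 : ℝ))))
      (F (mkZ !![(x₁+((a:ℕ):ℝ))/(p:ℝ), x₂; x₂, x₃] !![y₁/(p:ℝ), y₂; y₂, y₃])) := fun a =>
    hFour !![(x₁+((a:ℕ):ℝ))/(p:ℝ), x₂; x₂, x₃] !![y₁/(p:ℝ), y₂; y₂, y₃]
      (isSymm_two _ _ _) (isSymm_two _ _ _) hpd2
  have hSg0 : HasSum (fun v : ℤ × ℤ × ℤ => ∑ a : Fin p,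
      A (halfIntMat v.1 v.2.1 v.2.2) !![y₁/(p:ℝ), y₂; y₂, y₃] *
        Complex.exp (2 * (Real.pi : ℂ) * Complex.I *
          ((v.1 : ℂ) * ((!![(x₁+((a:ℕ):ℝ))/(p:ℝ), x₂; x₂, x₃] : M2R) 0 0 : ℝ)
           + (v.2.1 : ℂ) * ((!![(x₁+((a:ℕ):ℝ))/(p:ℝ), x₂; x₂, x₃] : M2R) 0 1 : ℝ)
           + (v.2.2 : ℂ) * ((!![(x₁+((a:ℕ):ℝ))/(p:ℝ), x₂; x₂, x₃] : M2R) 1 1 : ℝ))))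
      (∑ a : Fin p, F (mkZ !![(x₁+((a:ℕ):ℝ))/(p:ℝ), x₂; x₂, x₃] !![y₁/(p:ℝ), y₂; y₂, y₃])) :=
    hasSum_sum (fun a _ => hAterm a)
  have hSg := hSg0.mul_left ((p:ℂ)⁻¹)
  set g : ℤ × ℤ × ℤ → ℂ := fun v =>
    if (p:ℤ) ∣ v.1 then A (halfIntMat v.1 v.2.1 v.2.2) !![y₁/(p:ℝ), y₂; y₂, y₃] *
      Complex.exp (2*(Real.pi:ℂ)*Complex.I*((v.1:ℂ)*(x₁:ℝ)/(p:ℝ) + (v.2.1:ℂ)*(x₂:ℝ) + (v.2.2:ℂ)*(x₃:ℝ)))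
    else 0 with hgdef
  have hgroup : (fun v : ℤ × ℤ × ℤ => (p:ℂ)⁻¹ * ∑ a : Fin p,
      A (halfIntMat v.1 v.2.1 v.2.2) !![y₁/(p:ℝ), y₂; y₂, y₃] *
        Complex.exp (2 * (Real.pi : ℂ) * Complex.I *
          ((v.1 : ℂ) * ((!![(x₁+((a:ℕ):ℝ))/(p:ℝ), x₂; x₂, x₃] : M2R) 0 0 : ℝ)
           + (v.2.1 : ℂ) * ((!![(x₁+((a:ℕ):ℝ))/(p:ℝ), x₂; x₂, x₃] : M2R) 0 1 : ℝ)
           + (v.2.2 : ℂ) * ((!![(x₁+((a:ℕ):ℝ))/(p:ℝ), x₂; x₂, x₃] : M2R) 1 1 : ℝ)))) = g := by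
    funext v
    simp only [hgdef]
    simp only [Matrix.of_apply, Matrix.cons_val_zero, Matrix.cons_val_one, Matrix.head_cons,
      Matrix.cons_val', Matrix.head_fin_const, Matrix.empty_val', Matrix.cons_val_fin_one,
      Fin.isValue]
    have hsplit : ∀ a : Fin p,
        Complex.exp (2 * (Real.pi : ℂ) * Complex.I *
          ((v.1 : ℂ) * (((x₁+((a:ℕ):ℝ))/(p:ℝ) : ℝ):ℂ) + (v.2.1 : ℂ) * (x₂:ℝ) + (v.2.2 : ℂ) * (x₃:ℝ)))
        = Complex.exp (2*(Real.pi:ℂ)*Complex.I*((v.1:ℂ)*(x₁:ℝ)/(p:ℝ) + (v.2.1:ℂ)*(x₂:ℝ) + (v.2.2:ℂ)*(x₃:ℝ)))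
          * Complex.exp (2*(Real.pi:ℂ)*Complex.I*((v.1:ℂ)*((a:ℕ):ℂ)/(p:ℂ))) := by
      intro a
      rw [← Complex.exp_add]
      congr 1
      push_cast
      field_simp
      ring
    simp_rw [hsplit, ← mul_assoc]
    rw [← Finset.mul_sum, charSum p hp.pos v.1]
    split_ifs with hdvd
    · rw [← mul_assoc, mul_comm ((p:ℂ)⁻¹)]
      rw [mul_assoc, mul_assoc]
      rw [inv_mul_cancel₀ hpC, mul_one]
    · rw [mul_zero, mul_zero]
  rw [hgroup] at hSg
  set f2 : ℤ × ℤ × ℤ → ℂ := fun v =>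
    A !![(p:ℝ)*(v.1:ℝ), (v.2.1:ℝ)/2; (v.2.1:ℝ)/2, (v.2.2:ℝ)] !![y₁/(p:ℝ), y₂; y₂, y₃]
      * Complex.exp (2*(Real.pi:ℂ)*Complex.I*((v.1:ℂ)*(x₁:ℝ) + (v.2.1:ℂ)*(x₂:ℝ) + (v.2.2:ℂ)*(x₃:ℝ)))
    with hf2def
  set ι₂ : ℤ × ℤ × ℤ → ℤ × ℤ × ℤ := fun v => ((p:ℤ)*v.1, v.2.1, v.2.2) with hι₂def
  have hinj2 : Function.Injective ι₂ := by
    intro a b hab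
    rw [hι₂def] at hab
    simp only [Prod.mk.injEq] at hab
    obtain ⟨e1, e2, e3⟩ := hab
    have := mul_left_cancel₀ hpZ e1
    ext <;> simp_all
  have hvan2 : ∀ v ∉ Set.range ι₂, g v = 0 := by
    intro v hv
    simp only [hgdef]
    rw [if_neg]
    rintro ⟨n', hn'⟩
    exact hv ⟨(n', v.2.1, v.2.2), by rw [hι₂def]; simp [← hn']⟩
  have hcomp2 : g ∘ ι₂ = f2 := by
    funext v
    simp only [Function.comp_apply, hι₂def, hgdef, hf2def]
    rw [if_pos ⟨v.1, rfl⟩]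
    have hM2 : halfIntMat ((p:ℤ)*v.1) v.2.1 v.2.2
        = !![(p:ℝ)*(v.1:ℝ), (v.2.1:ℝ)/2; (v.2.1:ℝ)/2, (v.2.2:ℝ)] := by
      rw [halfIntMat]
      ext i j
      fin_cases i <;> fin_cases j <;>
        (simp only [Matrix.of_apply, Matrix.cons_val_zero, Matrix.cons_val_one, Matrix.head_cons,
          Matrix.cons_val', Matrix.head_fin_const, Matrix.empty_val', Matrix.cons_val_fin_one,
          Fin.isValue, Fin.mk_zero, Fin.mk_one]) <;>
        (push_cast; (try field_simp); (try ring))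
    rw [hM2]
    congr 1
    congr 1
    push_cast
    field_simp
  have hs2' : HasSum f2 ((p:ℂ)⁻¹ * ∑ a : Fin p,
      F (mkZ !![(x₁+((a:ℕ):ℝ))/(p:ℝ), x₂; x₂, x₃] !![y₁/(p:ℝ), y₂; y₂, y₃])) := by
    rw [← hcomp2]
    exact (hinj2.hasSum_iff hvan2).mpr hSg
  have hfinal := hs1.add hs2'
  rw [← hTp] at hfinal
  have hfun : (fun v : ℤ × ℤ × ℤ => f1 v + f2 v) = fun v : ℤ × ℤ × ℤ =>
      ((p:ℂ)^(k-1) * A !![(v.1:ℝ)/(p:ℝ), (v.2.1:ℝ)/(2*(p:ℝ)); (v.2.1:ℝ)/(2*(p:ℝ)), (v.2.2:ℝ)]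
          !![(p:ℝ)*y₁, (p:ℝ)*y₂; (p:ℝ)*y₂, y₃]
        + A !![(p:ℝ)*(v.1:ℝ), (v.2.1:ℝ)/2; (v.2.1:ℝ)/2, (v.2.2:ℝ)] !![y₁/(p:ℝ), y₂; y₂, y₃])
      * Complex.exp (2*(Real.pi:ℂ)*Complex.I*((v.1:ℂ)*(x₁:ℝ) + (v.2.1:ℂ)*(x₂:ℝ) + (v.2.2:ℂ)*(x₃:ℝ))) := by
    funext v
    simp only [hf1def, hf2def]
    ring
  rwa [hfun] at hfinal

end SSpf

namespace SSpf

lemma hasSum_TpLow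
    (k : ℤ) (hk : Even k)
    (F : M2C → ℂ) (A : M2R → M2R → ℂ)
    (hA0 : ∀ M Y : M2R, ¬ IsHalfIntegral M → A M Y = 0)
    (hFour : ∀ X Y : M2R, X.IsSymm → Y.IsSymm → Y.PosDef →
      HasSum (fun c : ℤ × ℤ × ℤ =>
        A (halfIntMat c.1 c.2.1 c.2.2) Y *
          Complex.exp (2 * (Real.pi : ℂ) * Complex.I *
            ((c.1 : ℂ) * X 0 0 + (c.2.1 : ℂ) * X 0 1 + (c.2.2 : ℂ) * X 1 1)))
        (F (mkZ X Y)))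
    (p : ℕ) (hp : p.Prime) (x₁ x₂ x₃ y₁ y₂ y₃ : ℝ)
    (hY : (!![y₁, Real.sqrt p * y₂; Real.sqrt p * y₂, y₃] : M2R).PosDef) :
    HasSum (fun v : ℤ × ℤ × ℤ =>
      ((p:ℂ)^(k-1) * A !![(v.1:ℝ), (v.2.1:ℝ)/(2*(p:ℝ)); (v.2.1:ℝ)/(2*(p:ℝ)), (v.2.2:ℝ)/(p:ℝ)]
          !![y₁, (p:ℝ)*y₂; (p:ℝ)*y₂, (p:ℝ)*y₃]
        + A !![(v.1:ℝ), (v.2.1:ℝ)/2; (v.2.1:ℝ)/2, (p:ℝ)*(v.2.2:ℝ)] !![y₁, y₂; y₂, y₃/(p:ℝ)])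
      * Complex.exp (2*(Real.pi:ℂ)*Complex.I*((v.1:ℂ)*(x₁:ℝ) + (v.2.1:ℂ)*(x₂:ℝ) + (v.2.2:ℂ)*(x₃:ℝ))))
    (TpLow k p F (mkZ !![x₁, Real.sqrt p * x₂; Real.sqrt p * x₂, x₃]
       !![y₁, Real.sqrt p * y₂; Real.sqrt p * y₂, y₃])) := by
  obtain ⟨jj, hjj⟩ := hk
  have hppos : (0:ℝ) < p := by exact_mod_cast hp.pos
  have hpR : (p:ℝ) ≠ 0 := hppos.ne'
  have hpC : (p:ℂ) ≠ 0 := by exact_mod_cast hpR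
  have hpZ : (p:ℤ) ≠ 0 := by exact_mod_cast hp.pos.ne'
  set s := Real.sqrt p with hsdef
  have hs0 : 0 < s := Real.sqrt_pos.mpr hppos
  have hsne : s ≠ 0 := hs0.ne'
  have hs2 : s^2 = (p:ℝ) := Real.sq_sqrt hppos.le
  have hσ2 : ((s:ℝ):ℂ)^2 = (p:ℂ) := by
    rw [← Complex.ofReal_pow, hs2]
    norm_cast
  have hσne : ((s:ℝ):ℂ) ≠ 0 := by exact_mod_cast hsne
  obtain ⟨hy₁, hy₃, hy₂⟩ := posDef_elim hY
  -- hy₂ : (s*y₂)*(s*y₂) < y₁*y₃, i.e. p*y₂^2 < y₁*y₃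
  have hpy : (p:ℝ)*(y₂*y₂) < y₁*y₃ := by nlinarith [hs2]
  have hr : ((p:ℝ) ^ (-(1:ℝ)/2)) = s⁻¹ := by
    rw [show (-(1:ℝ)/2) = -(1/2) from by ring, Real.rpow_neg hppos.le, ← Real.sqrt_eq_rpow]
  set Z := mkZ !![x₁, s * x₂; s * x₂, x₃] !![y₁, s * y₂; s * y₂, y₃] with hZdef
  have hZ00 : Z 0 0 = ((x₁:ℝ):ℂ) + ((y₁:ℝ):ℂ)*Complex.I := by
    rw [hZdef, mkZ_apply]; norm_num
  have hZ01 : Z 0 1 = ((s*x₂:ℝ):ℂ) + ((s*y₂:ℝ):ℂ)*Complex.I := by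
    rw [hZdef, mkZ_apply]; norm_num
  have hZ10 : Z 1 0 = ((s*x₂:ℝ):ℂ) + ((s*y₂:ℝ):ℂ)*Complex.I := by
    rw [hZdef, mkZ_apply]; norm_num
  have hZ11 : Z 1 1 = ((x₃:ℝ):ℂ) + ((y₃:ℝ):ℂ)*Complex.I := by
    rw [hZdef, mkZ_apply]; norm_num
  -- the infinity matrix
  set Ainf : M2R := ((p:ℝ) ^ (-(1:ℝ)/2)) • !![(p:ℝ), 0; 0, 1] with hAinfdef
  have hAinf00 : Ainf 0 0 = s := by
    rw [hAinfdef, Matrix.smul_apply, hr]; norm_num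
    rw [← hs2]; field_simp
  have hAinf01 : Ainf 0 1 = 0 := by rw [hAinfdef, Matrix.smul_apply]; norm_num
  have hAinf10 : Ainf 1 0 = 0 := by rw [hAinfdef, Matrix.smul_apply]; norm_num
  have hAinf11 : Ainf 1 1 = s⁻¹ := by rw [hAinfdef, Matrix.smul_apply, hr]; norm_num
  have h1_10 : (1 : M2R) 1 0 = 0 := by norm_num [Matrix.one_apply]
  have h1_00 : (1 : M2R) 0 0 = 1 := by norm_num [Matrix.one_apply]
  have h1_01 : (1 : M2R) 0 1 = 0 := by norm_num [Matrix.one_apply]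
  have h1_11 : (1 : M2R) 1 1 = 1 := by norm_num [Matrix.one_apply]
  have hdetinf : Ainf 0 0 * Ainf 1 1 = 1 := by rw [hAinf00, hAinf11]; field_simp
  have hdet1 : (1:M2R) 0 0 * (1:M2R) 1 1 = 1 := by rw [h1_00, h1_11]; norm_num
  have hWinf : smul4 (embLow Ainf) Z
      = mkZ !![x₁, (p:ℝ)*x₂; (p:ℝ)*x₂, (p:ℝ)*x₃] !![y₁, (p:ℝ)*y₂; (p:ℝ)*y₂, (p:ℝ)*y₃] := by
    rw [embLow, smul4_emb 1 Ainf h1_10 hAinf10 hdet1 hdetinf]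
    ext i j
    fin_cases i <;> fin_cases j <;>
      simp only [mkZ_apply, hAinf00, hAinf01, hAinf10, hAinf11, h1_00, h1_01, h1_10, h1_11,
        hZ00, hZ01, hZ10, hZ11, Matrix.of_apply, Matrix.cons_val_zero, Matrix.cons_val_one,
        Matrix.head_cons, Matrix.cons_val', Matrix.head_fin_const, Matrix.empty_val',
        Matrix.cons_val_fin_one, Fin.isValue, Fin.mk_zero, Fin.mk_one] <;>
      (push_cast; (try rw [← hσ2]); (try field_simp); (try ring))
  have hjinf : jfac (embLow Ainf) Z = ((s⁻¹ : ℝ):ℂ) := by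
    rw [embLow, jfac_emb 1 Ainf h1_10 hAinf10, hAinf11, h1_11]
    norm_num
  -- the a matrices
  have hAa00 : ∀ a : Fin p, (((p:ℝ) ^ (-(1:ℝ)/2)) • !![1, ((a:ℕ):ℝ); 0, (p:ℝ)] : M2R) 0 0 = s⁻¹ := by
    intro a; rw [Matrix.smul_apply, hr]; norm_num
  have hAa01 : ∀ a : Fin p, (((p:ℝ) ^ (-(1:ℝ)/2)) • !![1, ((a:ℕ):ℝ); 0, (p:ℝ)] : M2R) 0 1 = s⁻¹ * ((a:ℕ):ℝ) := by
    intro a; rw [Matrix.smul_apply, hr]; norm_num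
  have hAa10 : ∀ a : Fin p, (((p:ℝ) ^ (-(1:ℝ)/2)) • !![1, ((a:ℕ):ℝ); 0, (p:ℝ)] : M2R) 1 0 = 0 := by
    intro a; rw [Matrix.smul_apply]; norm_num
  have hAa11 : ∀ a : Fin p, (((p:ℝ) ^ (-(1:ℝ)/2)) • !![1, ((a:ℕ):ℝ); 0, (p:ℝ)] : M2R) 1 1 = s := by
    intro a; rw [Matrix.smul_apply, hr]; norm_num
    rw [← hs2]; field_simp
  have hdeta : ∀ a : Fin p, (((p:ℝ) ^ (-(1:ℝ)/2)) • !![1, ((a:ℕ):ℝ); 0, (p:ℝ)] : M2R) 0 0 *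
      (((p:ℝ) ^ (-(1:ℝ)/2)) • !![1, ((a:ℕ):ℝ); 0, (p:ℝ)] : M2R) 1 1 = 1 := by
    intro a; rw [hAa00 a, hAa11 a]; field_simp
  have hWa : ∀ a : Fin p, smul4 (embLow (((p:ℝ) ^ (-(1:ℝ)/2)) • !![1, ((a:ℕ):ℝ); 0, (p:ℝ)])) Z
      = mkZ !![x₁, x₂; x₂, (x₃+((a:ℕ):ℝ))/(p:ℝ)] !![y₁, y₂; y₂, y₃/(p:ℝ)] := by
    intro a
    rw [embLow, smul4_emb 1 _ h1_10 (hAa10 a) hdet1 (hdeta a)]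
    ext i j
    fin_cases i <;> fin_cases j <;>
      simp only [mkZ_apply, hAa00 a, hAa01 a, hAa10 a, hAa11 a, h1_00, h1_01, h1_10, h1_11,
        hZ00, hZ01, hZ10, hZ11, Matrix.of_apply, Matrix.cons_val_zero, Matrix.cons_val_one,
        Matrix.head_cons, Matrix.cons_val', Matrix.head_fin_const, Matrix.empty_val',
        Matrix.cons_val_fin_one, Fin.isValue, Fin.mk_zero, Fin.mk_one] <;>
      (push_cast; (try rw [← hσ2]); (try field_simp); (try ring))
  have hja : ∀ a : Fin p, jfac (embLow (((p:ℝ) ^ (-(1:ℝ)/2)) • !![1, ((a:ℕ):ℝ); 0, (p:ℝ)])) Z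
      = ((s : ℝ):ℂ) := by
    intro a
    rw [embLow, jfac_emb 1 _ h1_10 (hAa10 a), hAa11 a, h1_11]
    norm_num
  -- power arithmetic
  have hσk : ((s:ℝ):ℂ)^k = (p:ℂ)^jj := by
    rw [hjj, ← two_mul, _root_.zpow_mul, ← hσ2, _root_.zpow_two, pow_two]
  have hcp : (p:ℂ)^((k:ℂ)/2 - 1) = (p:ℂ)^(jj-1) := by
    rw [show ((k:ℂ)/2 - 1) = ((jj - 1 : ℤ) : ℂ) from by rw [hjj]; push_cast; ring,
      Complex.cpow_intCast]
  have h1pow : (((s⁻¹:ℝ)):ℂ)^(-k) = (p:ℂ)^jj := by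
    rw [Complex.ofReal_inv, _root_.inv_zpow, ← _root_.zpow_neg, neg_neg, hσk]
  have h2pow : (((s:ℝ)):ℂ)^(-k) = ((p:ℂ)^jj)⁻¹ := by
    rw [_root_.zpow_neg, hσk]
  -- the trace formula for TpUp
  have hTp : TpLow k p F Z = (p:ℂ)^(k-1) *
        F (mkZ !![x₁, (p:ℝ)*x₂; (p:ℝ)*x₂, (p:ℝ)*x₃] !![y₁, (p:ℝ)*y₂; (p:ℝ)*y₂, (p:ℝ)*y₃])
      + (p:ℂ)⁻¹ * ∑ a : Fin p, F (mkZ !![x₁, x₂; x₂, (x₃+((a:ℕ):ℝ))/(p:ℝ)] !![y₁, y₂; y₂, y₃/(p:ℝ)]) := by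
    rw [TpLow]
    have hterm : ∀ a : Fin p,
        slashOp k (embLow (((p:ℝ) ^ (-(1:ℝ)/2)) • !![1, ((a:ℕ):ℝ); 0, (p:ℝ)])) F Z
        = ((s:ℝ):ℂ)^(-k) * F (mkZ !![x₁, x₂; x₂, (x₃+((a:ℕ):ℝ))/(p:ℝ)] !![y₁, y₂; y₂, y₃/(p:ℝ)]) := by
      intro a
      rw [slashOp, hja a, hWa a]
    rw [Finset.sum_congr rfl (fun a _ => hterm a), slashOp, hjinf, hWinf, ← Finset.mul_sum]
    rw [hcp, h1pow, h2pow, mul_add, ← mul_assoc, ← mul_assoc, ← _root_.zpow_add₀ hpC,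
      show jj - 1 + jj = k - 1 from by omega,
      show (p:ℂ)^(jj-1) * ((p:ℂ)^jj)⁻¹ = (p:ℂ)⁻¹ from by
        rw [← _root_.zpow_neg (p:ℂ) jj, ← _root_.zpow_add₀ hpC,
          show jj - 1 + -jj = -1 from by omega, _root_.zpow_neg_one]]
  -- first summand: the infinity term
  have hpd1 : (!![y₁, (p:ℝ)*y₂; (p:ℝ)*y₂, (p:ℝ)*y₃] : M2R).PosDef := by
    apply posDef_mk
    · positivity
    · nlinarith
  have hinfty := (hFour !![x₁, (p:ℝ)*x₂; (p:ℝ)*x₂, (p:ℝ)*x₃] !![y₁, (p:ℝ)*y₂; (p:ℝ)*y₂, (p:ℝ)*y₃]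
    (isSymm_two _ _ _) (isSymm_two _ _ _) hpd1).mul_left ((p:ℂ)^(k-1))
  set f1 : ℤ × ℤ × ℤ → ℂ := fun v =>
    (p:ℂ)^(k-1) * A !![(v.1:ℝ), (v.2.1:ℝ)/(2*(p:ℝ)); (v.2.1:ℝ)/(2*(p:ℝ)), (v.2.2:ℝ)/(p:ℝ)]
        !![y₁, (p:ℝ)*y₂; (p:ℝ)*y₂, (p:ℝ)*y₃]
      * Complex.exp (2*(Real.pi:ℂ)*Complex.I*((v.1:ℂ)*(x₁:ℝ) + (v.2.1:ℂ)*(x₂:ℝ) + (v.2.2:ℂ)*(x₃:ℝ)))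
    with hf1def
  set ι₁ : ℤ × ℤ × ℤ → ℤ × ℤ × ℤ := fun v => (v.1, (p:ℤ)*v.2.1, (p:ℤ)*v.2.2) with hι₁def
  have hinj1 : Function.Injective ι₁ := by
    intro a b hab
    rw [hι₁def] at hab
    simp only [Prod.mk.injEq] at hab
    obtain ⟨e1, e2, e3⟩ := hab
    have := mul_left_cancel₀ hpZ e2
    have := mul_left_cancel₀ hpZ e3
    ext <;> simp_all
  have hcomp1 : (fun c : ℤ × ℤ × ℤ =>
      (p:ℂ)^(k-1) * (A (halfIntMat c.1 c.2.1 c.2.2) !![y₁, (p:ℝ)*y₂; (p:ℝ)*y₂, (p:ℝ)*y₃] *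
        Complex.exp (2 * (Real.pi : ℂ) * Complex.I *
          ((c.1 : ℂ) * ((!![x₁, (p:ℝ)*x₂; (p:ℝ)*x₂, (p:ℝ)*x₃] : M2R) 0 0 : ℝ)
           + (c.2.1 : ℂ) * ((!![x₁, (p:ℝ)*x₂; (p:ℝ)*x₂, (p:ℝ)*x₃] : M2R) 0 1 : ℝ)
           + (c.2.2 : ℂ) * ((!![x₁, (p:ℝ)*x₂; (p:ℝ)*x₂, (p:ℝ)*x₃] : M2R) 1 1 : ℝ)))))
      = f1 ∘ ι₁ := by
    funext c
    simp only [Function.comp_apply, hι₁def, hf1def]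
    simp only [Matrix.of_apply, Matrix.cons_val_zero, Matrix.cons_val_one, Matrix.head_cons,
      Matrix.cons_val', Matrix.head_fin_const, Matrix.empty_val', Matrix.cons_val_fin_one,
      Fin.isValue]
    rw [← mul_assoc]
    have hM : (!![((c.1:ℤ):ℝ), ((((p:ℤ)*c.2.1 : ℤ)):ℝ)/(2*(p:ℝ));
        ((((p:ℤ)*c.2.1 : ℤ)):ℝ)/(2*(p:ℝ)), ((((p:ℤ)*c.2.2 : ℤ)):ℝ)/(p:ℝ)] : M2R)
        = halfIntMat c.1 c.2.1 c.2.2 := by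
      rw [halfIntMat]
      ext i j
      fin_cases i <;> fin_cases j <;>
        (simp only [Matrix.of_apply, Matrix.cons_val_zero, Matrix.cons_val_one, Matrix.head_cons,
          Matrix.cons_val', Matrix.head_fin_const, Matrix.empty_val', Matrix.cons_val_fin_one,
          Fin.isValue, Fin.mk_zero, Fin.mk_one]) <;>
        (push_cast; (try field_simp); (try ring))
    rw [hM]
    congr 1
    congr 1
    push_cast
    ring
  have hvan1 : ∀ v ∉ Set.range ι₁, f1 v = 0 := by
    intro v hv
    have hnd : ¬((p:ℤ) ∣ v.2.1 ∧ (p:ℤ) ∣ v.2.2) := by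
      rintro ⟨⟨r', hr'⟩, ⟨m', hm'⟩⟩
      exact hv ⟨(v.1, r', m'), by rw [hι₁def]; simp [← hr', ← hm']⟩
    simp only [hf1def]
    have := hA0 _ !![y₁, (p:ℝ)*y₂; (p:ℝ)*y₂, (p:ℝ)*y₃]
      (not_halfIntegral_low hpR v.1 v.2.1 v.2.2 hnd)
    simp only [this, mul_zero, zero_mul]
  rw [hcomp1] at hinfty
  have hs1 : HasSum f1 ((p:ℂ)^(k-1) *
      F (mkZ !![x₁, (p:ℝ)*x₂; (p:ℝ)*x₂, (p:ℝ)*x₃] !![y₁, (p:ℝ)*y₂; (p:ℝ)*y₂, (p:ℝ)*y₃])) :=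
    (hinj1.hasSum_iff hvan1).mp hinfty
  -- second summand: the a-sum
  have hpd2 : (!![y₁, y₂; y₂, y₃/(p:ℝ)] : M2R).PosDef := by
    apply posDef_mk
    · exact hy₁
    · rw [← mul_div_assoc, lt_div_iff₀ hppos]
      nlinarith
  have hAterm : ∀ a : Fin p, HasSum (fun c : ℤ × ℤ × ℤ =>
      A (halfIntMat c.1 c.2.1 c.2.2) !![y₁, y₂; y₂, y₃/(p:ℝ)] *
        Complex.exp (2 * (Real.pi : ℂ) * Complex.I *
          ((c.1 : ℂ) * ((!![x₁, x₂; x₂, (x₃+((a:ℕ):ℝ))/(p:ℝ)] : M2R) 0 0 : ℝ)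
           + (c.2.1 : ℂ) * ((!![x₁, x₂; x₂, (x₃+((a:ℕ):ℝ))/(p:ℝ)] : M2R) 0 1 : ℝ)
           + (c.2.2 : ℂ) * ((!![x₁, x₂; x₂, (x₃+((a:ℕ):ℝ))/(p:ℝ)] : M2R) 1 1 : ℝ))))
      (F (mkZ !![x₁, x₂; x₂, (x₃+((a:ℕ):ℝ))/(p:ℝ)] !![y₁, y₂; y₂, y₃/(p:ℝ)])) := fun a =>
    hFour !![x₁, x₂; x₂, (x₃+((a:ℕ):ℝ))/(p:ℝ)] !![y₁, y₂; y₂, y₃/(p:ℝ)]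
      (isSymm_two _ _ _) (isSymm_two _ _ _) hpd2
  have hSg0 : HasSum (fun v : ℤ × ℤ × ℤ => ∑ a : Fin p,
      A (halfIntMat v.1 v.2.1 v.2.2) !![y₁, y₂; y₂, y₃/(p:ℝ)] *
        Complex.exp (2 * (Real.pi : ℂ) * Complex.I *
          ((v.1 : ℂ) * ((!![x₁, x₂; x₂, (x₃+((a:ℕ):ℝ))/(p:ℝ)] : M2R) 0 0 : ℝ)
           + (v.2.1 : ℂ) * ((!![x₁, x₂; x₂, (x₃+((a:ℕ):ℝ))/(p:ℝ)] : M2R) 0 1 : ℝ)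
           + (v.2.2 : ℂ) * ((!![x₁, x₂; x₂, (x₃+((a:ℕ):ℝ))/(p:ℝ)] : M2R) 1 1 : ℝ))))
      (∑ a : Fin p, F (mkZ !![x₁, x₂; x₂, (x₃+((a:ℕ):ℝ))/(p:ℝ)] !![y₁, y₂; y₂, y₃/(p:ℝ)])) :=
    hasSum_sum (fun a _ => hAterm a)
  have hSg := hSg0.mul_left ((p:ℂ)⁻¹)
  set g : ℤ × ℤ × ℤ → ℂ := fun v =>
    if (p:ℤ) ∣ v.2.2 then A (halfIntMat v.1 v.2.1 v.2.2) !![y₁, y₂; y₂, y₃/(p:ℝ)] *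
      Complex.exp (2*(Real.pi:ℂ)*Complex.I*((v.1:ℂ)*(x₁:ℝ) + (v.2.1:ℂ)*(x₂:ℝ) + (v.2.2:ℂ)*(x₃:ℝ)/(p:ℝ)))
    else 0 with hgdef
  have hgroup : (fun v : ℤ × ℤ × ℤ => (p:ℂ)⁻¹ * ∑ a : Fin p,
      A (halfIntMat v.1 v.2.1 v.2.2) !![y₁, y₂; y₂, y₃/(p:ℝ)] *
        Complex.exp (2 * (Real.pi : ℂ) * Complex.I *
          ((v.1 : ℂ) * ((!![x₁, x₂; x₂, (x₃+((a:ℕ):ℝ))/(p:ℝ)] : M2R) 0 0 : ℝ)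
           + (v.2.1 : ℂ) * ((!![x₁, x₂; x₂, (x₃+((a:ℕ):ℝ))/(p:ℝ)] : M2R) 0 1 : ℝ)
           + (v.2.2 : ℂ) * ((!![x₁, x₂; x₂, (x₃+((a:ℕ):ℝ))/(p:ℝ)] : M2R) 1 1 : ℝ)))) = g := by
    funext v
    simp only [hgdef]
    simp only [Matrix.of_apply, Matrix.cons_val_zero, Matrix.cons_val_one, Matrix.head_cons,
      Matrix.cons_val', Matrix.head_fin_const, Matrix.empty_val', Matrix.cons_val_fin_one,
      Fin.isValue]
    have hsplit : ∀ a : Fin p,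
        Complex.exp (2 * (Real.pi : ℂ) * Complex.I *
          ((v.1 : ℂ) * (x₁:ℝ) + (v.2.1 : ℂ) * (x₂:ℝ) + (v.2.2 : ℂ) * (((x₃+((a:ℕ):ℝ))/(p:ℝ) : ℝ):ℂ)))
        = Complex.exp (2*(Real.pi:ℂ)*Complex.I*((v.1:ℂ)*(x₁:ℝ) + (v.2.1:ℂ)*(x₂:ℝ) + (v.2.2:ℂ)*(x₃:ℝ)/(p:ℝ)))
          * Complex.exp (2*(Real.pi:ℂ)*Complex.I*((v.2.2:ℂ)*((a:ℕ):ℂ)/(p:ℂ))) := by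
      intro a
      rw [← Complex.exp_add]
      congr 1
      push_cast
      field_simp
      ring
    simp_rw [hsplit, ← mul_assoc]
    rw [← Finset.mul_sum, charSum p hp.pos v.2.2]
    split_ifs with hdvd
    · rw [← mul_assoc, mul_comm ((p:ℂ)⁻¹)]
      rw [mul_assoc, mul_assoc]
      rw [inv_mul_cancel₀ hpC, mul_one]
    · rw [mul_zero, mul_zero]
  rw [hgroup] at hSg
  set f2 : ℤ × ℤ × ℤ → ℂ := fun v =>
    A !![(v.1:ℝ), (v.2.1:ℝ)/2; (v.2.1:ℝ)/2, (p:ℝ)*(v.2.2:ℝ)] !![y₁, y₂; y₂, y₃/(p:ℝ)]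
      * Complex.exp (2*(Real.pi:ℂ)*Complex.I*((v.1:ℂ)*(x₁:ℝ) + (v.2.1:ℂ)*(x₂:ℝ) + (v.2.2:ℂ)*(x₃:ℝ)))
    with hf2def
  set ι₂ : ℤ × ℤ × ℤ → ℤ × ℤ × ℤ := fun v => (v.1, v.2.1, (p:ℤ)*v.2.2) with hι₂def
  have hinj2 : Function.Injective ι₂ := by
    intro a b hab
    rw [hι₂def] at hab
    simp only [Prod.mk.injEq] at hab
    obtain ⟨e1, e2, e3⟩ := hab
    have := mul_left_cancel₀ hpZ e3
    ext <;> simp_all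
  have hvan2 : ∀ v ∉ Set.range ι₂, g v = 0 := by
    intro v hv
    simp only [hgdef]
    rw [if_neg]
    rintro ⟨n', hn'⟩
    exact hv ⟨(v.1, v.2.1, n'), by rw [hι₂def]; simp [← hn']⟩
  have hcomp2 : g ∘ ι₂ = f2 := by
    funext v
    simp only [Function.comp_apply, hι₂def, hgdef, hf2def]
    rw [if_pos ⟨v.2.2, rfl⟩]
    have hM2 : halfIntMat v.1 v.2.1 ((p:ℤ)*v.2.2)
        = !![(v.1:ℝ), (v.2.1:ℝ)/2; (v.2.1:ℝ)/2, (p:ℝ)*(v.2.2:ℝ)] := by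
      rw [halfIntMat]
      ext i j
      fin_cases i <;> fin_cases j <;>
        (simp only [Matrix.of_apply, Matrix.cons_val_zero, Matrix.cons_val_one, Matrix.head_cons,
          Matrix.cons_val', Matrix.head_fin_const, Matrix.empty_val', Matrix.cons_val_fin_one,
          Fin.isValue, Fin.mk_zero, Fin.mk_one]) <;>
        (push_cast; (try field_simp); (try ring))
    rw [hM2]
    congr 1
    congr 1
    push_cast
    field_simp
  have hs2' : HasSum f2 ((p:ℂ)⁻¹ * ∑ a : Fin p,
      F (mkZ !![x₁, x₂; x₂, (x₃+((a:ℕ):ℝ))/(p:ℝ)] !![y₁, y₂; y₂, y₃/(p:ℝ)])) := by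
    rw [← hcomp2]
    exact (hinj2.hasSum_iff hvan2).mpr hSg
  have hfinal := hs1.add hs2'
  rw [← hTp] at hfinal
  have hfun : (fun v : ℤ × ℤ × ℤ => f1 v + f2 v) = fun v : ℤ × ℤ × ℤ =>
      ((p:ℂ)^(k-1) * A !![(v.1:ℝ), (v.2.1:ℝ)/(2*(p:ℝ)); (v.2.1:ℝ)/(2*(p:ℝ)), (v.2.2:ℝ)/(p:ℝ)]
          !![y₁, (p:ℝ)*y₂; (p:ℝ)*y₂, (p:ℝ)*y₃]
        + A !![(v.1:ℝ), (v.2.1:ℝ)/2; (v.2.1:ℝ)/2, (p:ℝ)*(v.2.2:ℝ)] !![y₁, y₂; y₂, y₃/(p:ℝ)])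
      * Complex.exp (2*(Real.pi:ℂ)*Complex.I*((v.1:ℂ)*(x₁:ℝ) + (v.2.1:ℂ)*(x₂:ℝ) + (v.2.2:ℂ)*(x₃:ℝ))) := by
    funext v
    simp only [hf1def, hf2def]
    ring
  rwa [hfun] at hfinal

end SSpf
namespace SSpf

/-- summability of the up-coefficients -/
lemma summable_up (A : M2R → M2R → ℂ)
    (hA0 : ∀ M Y : M2R, ¬ IsHalfIntegral M → A M Y = 0)
    (habs : ∀ X Y : M2R, X.IsSymm → Y.IsSymm → Y.PosDef →
      Summable (fun c : ℤ × ℤ × ℤ => ‖A (halfIntMat c.1 c.2.1 c.2.2) Y‖))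
    (p : ℕ) (hp : p.Prime) (Y1 : M2R) (hY1s : Y1.IsSymm) (hY1 : Y1.PosDef) :
    Summable (fun v : ℤ × ℤ × ℤ =>
      ‖A !![(v.1:ℝ)/(p:ℝ), (v.2.1:ℝ)/(2*(p:ℝ)); (v.2.1:ℝ)/(2*(p:ℝ)), (v.2.2:ℝ)] Y1‖) := by
  have hpR : (p:ℝ) ≠ 0 := by
    have : (0:ℝ) < p := by exact_mod_cast hp.pos
    exact this.ne'
  have hpZ : (p:ℤ) ≠ 0 := by exact_mod_cast hp.pos.ne'
  set ι₁ : ℤ × ℤ × ℤ → ℤ × ℤ × ℤ := fun v => ((p:ℤ)*v.1, (p:ℤ)*v.2.1, v.2.2) with hι₁def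
  have hinj1 : Function.Injective ι₁ := by
    intro a b hab
    rw [hι₁def] at hab
    simp only [Prod.mk.injEq] at hab
    obtain ⟨e1, e2, e3⟩ := hab
    have := mul_left_cancel₀ hpZ e1
    have := mul_left_cancel₀ hpZ e2
    ext <;> simp_all
  have hvan : ∀ v ∉ Set.range ι₁,
      ‖A !![(v.1:ℝ)/(p:ℝ), (v.2.1:ℝ)/(2*(p:ℝ)); (v.2.1:ℝ)/(2*(p:ℝ)), (v.2.2:ℝ)] Y1‖ = 0 := by
    intro v hv
    have hnd : ¬((p:ℤ) ∣ v.1 ∧ (p:ℤ) ∣ v.2.1) := by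
      rintro ⟨⟨n', hn'⟩, ⟨r', hr'⟩⟩
      exact hv ⟨(n', r', v.2.2), by rw [hι₁def]; simp [← hn', ← hr']⟩
    rw [hA0 _ Y1 (not_halfIntegral_up hpR v.1 v.2.1 v.2.2 hnd), norm_zero]
  refine (Function.Injective.summable_iff hinj1 hvan).mp ?_
  have h := habs 0 Y1 Matrix.isSymm_zero hY1s hY1
  refine h.congr fun c => ?_
  rw [Function.comp_apply, hι₁def]
  congr 2
  rw [halfIntMat]
  ext i j
  fin_cases i <;> fin_cases j <;>
    (simp only [Matrix.of_apply, Matrix.cons_val_zero, Matrix.cons_val_one, Matrix.head_cons,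
      Matrix.cons_val', Matrix.head_fin_const, Matrix.empty_val', Matrix.cons_val_fin_one,
      Fin.isValue, Fin.mk_zero, Fin.mk_one]) <;>
    (push_cast; (try field_simp); (try ring))

/-- summability of the low-coefficients -/
lemma summable_low (A : M2R → M2R → ℂ)
    (hA0 : ∀ M Y : M2R, ¬ IsHalfIntegral M → A M Y = 0)
    (habs : ∀ X Y : M2R, X.IsSymm → Y.IsSymm → Y.PosDef →
      Summable (fun c : ℤ × ℤ × ℤ => ‖A (halfIntMat c.1 c.2.1 c.2.2) Y‖))
    (p : ℕ) (hp : p.Prime) (Y1 : M2R) (hY1s : Y1.IsSymm) (hY1 : Y1.PosDef) :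
    Summable (fun v : ℤ × ℤ × ℤ =>
      ‖A !![(v.1:ℝ), (v.2.1:ℝ)/(2*(p:ℝ)); (v.2.1:ℝ)/(2*(p:ℝ)), (v.2.2:ℝ)/(p:ℝ)] Y1‖) := by
  have hpR : (p:ℝ) ≠ 0 := by
    have : (0:ℝ) < p := by exact_mod_cast hp.pos
    exact this.ne'
  have hpZ : (p:ℤ) ≠ 0 := by exact_mod_cast hp.pos.ne'
  set ι₁ : ℤ × ℤ × ℤ → ℤ × ℤ × ℤ := fun v => (v.1, (p:ℤ)*v.2.1, (p:ℤ)*v.2.2) with hι₁def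
  have hinj1 : Function.Injective ι₁ := by
    intro a b hab
    rw [hι₁def] at hab
    simp only [Prod.mk.injEq] at hab
    obtain ⟨e1, e2, e3⟩ := hab
    have := mul_left_cancel₀ hpZ e2
    have := mul_left_cancel₀ hpZ e3
    ext <;> simp_all
  have hvan : ∀ v ∉ Set.range ι₁,
      ‖A !![(v.1:ℝ), (v.2.1:ℝ)/(2*(p:ℝ)); (v.2.1:ℝ)/(2*(p:ℝ)), (v.2.2:ℝ)/(p:ℝ)] Y1‖ = 0 := by
    intro v hv
    have hnd : ¬((p:ℤ) ∣ v.2.1 ∧ (p:ℤ) ∣ v.2.2) := by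
      rintro ⟨⟨r', hr'⟩, ⟨m', hm'⟩⟩
      exact hv ⟨(v.1, r', m'), by rw [hι₁def]; simp [← hr', ← hm']⟩
    rw [hA0 _ Y1 (not_halfIntegral_low hpR v.1 v.2.1 v.2.2 hnd), norm_zero]
  refine (Function.Injective.summable_iff hinj1 hvan).mp ?_
  have h := habs 0 Y1 Matrix.isSymm_zero hY1s hY1
  refine h.congr fun c => ?_
  rw [Function.comp_apply, hι₁def]
  congr 2
  rw [halfIntMat]
  ext i j
  fin_cases i <;> fin_cases j <;>
    (simp only [Matrix.of_apply, Matrix.cons_val_zero, Matrix.cons_val_one, Matrix.head_cons,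
      Matrix.cons_val', Matrix.head_fin_const, Matrix.empty_val', Matrix.cons_val_fin_one,
      Fin.isValue, Fin.mk_zero, Fin.mk_one]) <;>
    (push_cast; (try field_simp); (try ring))

/-- summability of shifted coefficients (first entry multiplied) -/
lemma summable_shift_up (A : M2R → M2R → ℂ)
    (habs : ∀ X Y : M2R, X.IsSymm → Y.IsSymm → Y.PosDef →
      Summable (fun c : ℤ × ℤ × ℤ => ‖A (halfIntMat c.1 c.2.1 c.2.2) Y‖))
    (p : ℕ) (hp : p.Prime) (Y2 : M2R) (hY2s : Y2.IsSymm) (hY2 : Y2.PosDef) :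
    Summable (fun v : ℤ × ℤ × ℤ =>
      ‖A !![(p:ℝ)*(v.1:ℝ), (v.2.1:ℝ)/2; (v.2.1:ℝ)/2, (v.2.2:ℝ)] Y2‖) := by
  have hpZ : (p:ℤ) ≠ 0 := by exact_mod_cast hp.pos.ne'
  have h := (habs 0 Y2 Matrix.isSymm_zero hY2s hY2).comp_injective
    (i := fun v : ℤ × ℤ × ℤ => ((p:ℤ)*v.1, v.2.1, v.2.2)) (by
      intro a b hab
      simp only [Prod.mk.injEq] at hab
      obtain ⟨e1, e2, e3⟩ := hab
      have := mul_left_cancel₀ hpZ e1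
      ext <;> simp_all)
  refine h.congr fun v => ?_
  rw [Function.comp_apply]
  congr 2
  rw [halfIntMat]
  ext i j
  fin_cases i <;> fin_cases j <;>
    (simp only [Matrix.of_apply, Matrix.cons_val_zero, Matrix.cons_val_one, Matrix.head_cons,
      Matrix.cons_val', Matrix.head_fin_const, Matrix.empty_val', Matrix.cons_val_fin_one,
      Fin.isValue, Fin.mk_zero, Fin.mk_one]) <;>
    (push_cast; (try field_simp); (try ring))

/-- summability of shifted coefficients (last entry multiplied) -/
lemma summable_shift_low (A : M2R → M2R → ℂ)
    (habs : ∀ X Y : M2R, X.IsSymm → Y.IsSymm → Y.PosDef →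
      Summable (fun c : ℤ × ℤ × ℤ => ‖A (halfIntMat c.1 c.2.1 c.2.2) Y‖))
    (p : ℕ) (hp : p.Prime) (Y2 : M2R) (hY2s : Y2.IsSymm) (hY2 : Y2.PosDef) :
    Summable (fun v : ℤ × ℤ × ℤ =>
      ‖A !![(v.1:ℝ), (v.2.1:ℝ)/2; (v.2.1:ℝ)/2, (p:ℝ)*(v.2.2:ℝ)] Y2‖) := by
  have hpZ : (p:ℤ) ≠ 0 := by exact_mod_cast hp.pos.ne'
  have h := (habs 0 Y2 Matrix.isSymm_zero hY2s hY2).comp_injective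
    (i := fun v : ℤ × ℤ × ℤ => (v.1, v.2.1, (p:ℤ)*v.2.2)) (by
      intro a b hab
      simp only [Prod.mk.injEq] at hab
      obtain ⟨e1, e2, e3⟩ := hab
      have := mul_left_cancel₀ hpZ e3
      ext <;> simp_all)
  refine h.congr fun v => ?_
  rw [Function.comp_apply]
  congr 2
  rw [halfIntMat]
  ext i j
  fin_cases i <;> fin_cases j <;>
    (simp only [Matrix.of_apply, Matrix.cons_val_zero, Matrix.cons_val_one, Matrix.head_cons,
      Matrix.cons_val', Matrix.head_fin_const, Matrix.empty_val', Matrix.cons_val_fin_one,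
      Fin.isValue, Fin.mk_zero, Fin.mk_one]) <;>
    (push_cast; (try field_simp); (try ring))

end SSpf

/-- for a `Γ₂`-modular function with an absolutely convergent Fourier
expansion, strong symmetry is equivalent to the identity among Fourier coefficients. -/
theorem fourier_coefficient_criterion (k : ℤ) (hk : Even k) (F : M2C → ℂ)
    (hFc : ContinuousOn F SiegelH2)
    (hF : ∀ γ ∈ Sp2Z, ∀ Z ∈ SiegelH2, slashOp k γ F Z = F Z)
    (A : M2R → M2R → ℂ)
    (hA0 : ∀ M Y : M2R, ¬ IsHalfIntegral M → A M Y = 0)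
    (hFour : ∀ X Y : M2R, X.IsSymm → Y.IsSymm → Y.PosDef →
      HasSum (fun c : ℤ × ℤ × ℤ =>
        A (halfIntMat c.1 c.2.1 c.2.2) Y *
          Complex.exp (2 * (Real.pi : ℂ) * Complex.I *
            ((c.1 : ℂ) * X 0 0 + (c.2.1 : ℂ) * X 0 1 + (c.2.2 : ℂ) * X 1 1)))
        (F (mkZ X Y)))
    (habs : ∀ X Y : M2R, X.IsSymm → Y.IsSymm → Y.PosDef →
      Summable (fun c : ℤ × ℤ × ℤ => ‖A (halfIntMat c.1 c.2.1 c.2.2) Y‖)) :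
    (∀ p : ℕ, p.Prime → ∀ Z ∈ SiegelH2, TpUp k p F Z = TpLow k p F Z) ↔
    (∀ p : ℕ, p.Prime → ∀ n r m : ℤ, ∀ y₁ y₂ y₃ : ℝ,
      (!![y₁, y₂; y₂, y₃] : M2R).PosDef → (p : ℝ) * y₂ ^ 2 < y₁ * y₃ →
      (p : ℂ) ^ (k - 1) *
          A !![(n:ℝ)/(p:ℝ), (r:ℝ)/(2*(p:ℝ)); (r:ℝ)/(2*(p:ℝ)), (m:ℝ)]
            !![(p:ℝ)*y₁, (p:ℝ)*y₂; (p:ℝ)*y₂, y₃]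
        + A !![(p:ℝ)*(n:ℝ), (r:ℝ)/2; (r:ℝ)/2, (m:ℝ)] !![y₁/(p:ℝ), y₂; y₂, y₃]
      = (p : ℂ) ^ (k - 1) *
          A !![(n:ℝ), (r:ℝ)/(2*(p:ℝ)); (r:ℝ)/(2*(p:ℝ)), (m:ℝ)/(p:ℝ)]
            !![y₁, (p:ℝ)*y₂; (p:ℝ)*y₂, (p:ℝ)*y₃]
        + A !![(n:ℝ), (r:ℝ)/2; (r:ℝ)/2, (p:ℝ)*(m:ℝ)] !![y₁, y₂; y₂, y₃/(p:ℝ)]) := by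
  constructor
  · -- strong symmetry implies the coefficient identity
    intro H p hp n r m y₁ y₂ y₃ hYpd hlt
    have hppos : (0:ℝ) < p := by exact_mod_cast hp.pos
    have hpR : (p:ℝ) ≠ 0 := hppos.ne'
    set s := Real.sqrt p with hsdef
    have hs0 : 0 < s := Real.sqrt_pos.mpr hppos
    have hs2 : s^2 = (p:ℝ) := Real.sq_sqrt hppos.le
    obtain ⟨hy₁, hy₃, hy₂⟩ := SSpf.posDef_elim hYpd
    have hY' : (!![y₁, s*y₂; s*y₂, y₃] : M2R).PosDef := by
      apply SSpf.posDef_mk _ _ _ hy₁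
      nlinarith
    set d : ℤ × ℤ × ℤ → ℂ := fun v =>
      ((p:ℂ)^(k-1) * A !![(v.1:ℝ)/(p:ℝ), (v.2.1:ℝ)/(2*(p:ℝ)); (v.2.1:ℝ)/(2*(p:ℝ)), (v.2.2:ℝ)]
          !![(p:ℝ)*y₁, (p:ℝ)*y₂; (p:ℝ)*y₂, y₃]
        + A !![(p:ℝ)*(v.1:ℝ), (v.2.1:ℝ)/2; (v.2.1:ℝ)/2, (v.2.2:ℝ)] !![y₁/(p:ℝ), y₂; y₂, y₃])
      - ((p:ℂ)^(k-1) * A !![(v.1:ℝ), (v.2.1:ℝ)/(2*(p:ℝ)); (v.2.1:ℝ)/(2*(p:ℝ)), (v.2.2:ℝ)/(p:ℝ)]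
          !![y₁, (p:ℝ)*y₂; (p:ℝ)*y₂, (p:ℝ)*y₃]
        + A !![(v.1:ℝ), (v.2.1:ℝ)/2; (v.2.1:ℝ)/2, (p:ℝ)*(v.2.2:ℝ)] !![y₁, y₂; y₂, y₃/(p:ℝ)]) with hddef
    have hHS : ∀ x₁ x₂ x₃ : ℝ, HasSum (fun v : ℤ × ℤ × ℤ =>
        d v * Complex.exp (2*(Real.pi:ℂ)*Complex.I*((v.1:ℂ)*(x₁:ℝ) + (v.2.1:ℂ)*(x₂:ℝ) + (v.2.2:ℂ)*(x₃:ℝ)))) 0 := by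
      intro x₁ x₂ x₃
      have h1 := SSpf.hasSum_TpUp k hk F A hA0 hFour p hp x₁ x₂ x₃ y₁ y₂ y₃ hY'
      have h2 := SSpf.hasSum_TpLow k hk F A hA0 hFour p hp x₁ x₂ x₃ y₁ y₂ y₃ hY'
      have hmem := SSpf.mkZ_mem _ _ (SSpf.isSymm_two x₁ (s*x₂) x₃) (SSpf.isSymm_two y₁ (s*y₂) y₃) hY'
      have heq := H p hp _ hmem
      rw [heq] at h1
      have h3 := h1.sub h2
      rw [sub_self] at h3
      have hfe : (fun v : ℤ × ℤ × ℤ =>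
          ((p:ℂ)^(k-1) * A !![(v.1:ℝ)/(p:ℝ), (v.2.1:ℝ)/(2*(p:ℝ)); (v.2.1:ℝ)/(2*(p:ℝ)), (v.2.2:ℝ)]
              !![(p:ℝ)*y₁, (p:ℝ)*y₂; (p:ℝ)*y₂, y₃]
            + A !![(p:ℝ)*(v.1:ℝ), (v.2.1:ℝ)/2; (v.2.1:ℝ)/2, (v.2.2:ℝ)] !![y₁/(p:ℝ), y₂; y₂, y₃])
          * Complex.exp (2*(Real.pi:ℂ)*Complex.I*((v.1:ℂ)*(x₁:ℝ) + (v.2.1:ℂ)*(x₂:ℝ) + (v.2.2:ℂ)*(x₃:ℝ)))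
          - ((p:ℂ)^(k-1) * A !![(v.1:ℝ), (v.2.1:ℝ)/(2*(p:ℝ)); (v.2.1:ℝ)/(2*(p:ℝ)), (v.2.2:ℝ)/(p:ℝ)]
              !![y₁, (p:ℝ)*y₂; (p:ℝ)*y₂, (p:ℝ)*y₃]
            + A !![(v.1:ℝ), (v.2.1:ℝ)/2; (v.2.1:ℝ)/2, (p:ℝ)*(v.2.2:ℝ)] !![y₁, y₂; y₂, y₃/(p:ℝ)])
          * Complex.exp (2*(Real.pi:ℂ)*Complex.I*((v.1:ℂ)*(x₁:ℝ) + (v.2.1:ℂ)*(x₂:ℝ) + (v.2.2:ℂ)*(x₃:ℝ))))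
          = fun v : ℤ × ℤ × ℤ =>
            d v * Complex.exp (2*(Real.pi:ℂ)*Complex.I*((v.1:ℂ)*(x₁:ℝ) + (v.2.1:ℂ)*(x₂:ℝ) + (v.2.2:ℂ)*(x₃:ℝ))) := by
        funext v
        simp only [hddef]
        ring
      rwa [hfe] at h3
    have hpdY1 : (!![(p:ℝ)*y₁, (p:ℝ)*y₂; (p:ℝ)*y₂, y₃] : M2R).PosDef := by
      apply SSpf.posDef_mk
      · positivity
      · nlinarith
    have hpdY2 : (!![y₁/(p:ℝ), y₂; y₂, y₃] : M2R).PosDef := by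
      apply SSpf.posDef_mk
      · positivity
      · rw [div_mul_eq_mul_div, lt_div_iff₀ hppos]
        nlinarith
    have hpdY3 : (!![y₁, (p:ℝ)*y₂; (p:ℝ)*y₂, (p:ℝ)*y₃] : M2R).PosDef := by
      apply SSpf.posDef_mk _ _ _ hy₁
      nlinarith
    have hpdY4 : (!![y₁, y₂; y₂, y₃/(p:ℝ)] : M2R).PosDef := by
      apply SSpf.posDef_mk _ _ _ hy₁
      rw [← mul_div_assoc, lt_div_iff₀ hppos]
      nlinarith
    have S1 := SSpf.summable_up A hA0 habs p hp _ (SSpf.isSymm_two _ _ _) hpdY1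
    have S2 := SSpf.summable_shift_up A habs p hp _ (SSpf.isSymm_two _ _ _) hpdY2
    have S3 := SSpf.summable_low A hA0 habs p hp _ (SSpf.isSymm_two _ _ _) hpdY3
    have S4 := SSpf.summable_shift_low A habs p hp _ (SSpf.isSymm_two _ _ _) hpdY4
    have hdS : Summable (fun v => ‖d v‖) := by
      refine Summable.of_nonneg_of_le (fun v => norm_nonneg _) (fun v => ?_)
        ((((S1.mul_left ‖(p:ℂ)^(k-1)‖).add S2).add ((S3.mul_left ‖(p:ℂ)^(k-1)‖).add S4)))
      simp only [hddef]
      refine (norm_sub_le _ _).trans ?_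
      have e1 := norm_add_le ((p:ℂ)^(k-1) * A !![(v.1:ℝ)/(p:ℝ), (v.2.1:ℝ)/(2*(p:ℝ)); (v.2.1:ℝ)/(2*(p:ℝ)), (v.2.2:ℝ)]
          !![(p:ℝ)*y₁, (p:ℝ)*y₂; (p:ℝ)*y₂, y₃])
        (A !![(p:ℝ)*(v.1:ℝ), (v.2.1:ℝ)/2; (v.2.1:ℝ)/2, (v.2.2:ℝ)] !![y₁/(p:ℝ), y₂; y₂, y₃])
      have e2 := norm_add_le ((p:ℂ)^(k-1) * A !![(v.1:ℝ), (v.2.1:ℝ)/(2*(p:ℝ)); (v.2.1:ℝ)/(2*(p:ℝ)), (v.2.2:ℝ)/(p:ℝ)]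
          !![y₁, (p:ℝ)*y₂; (p:ℝ)*y₂, (p:ℝ)*y₃])
        (A !![(v.1:ℝ), (v.2.1:ℝ)/2; (v.2.1:ℝ)/2, (p:ℝ)*(v.2.2:ℝ)] !![y₁, y₂; y₂, y₃/(p:ℝ)])
      rw [norm_mul] at e1 e2
      linarith
    have hzero := SSpf.fourier3D d hdS hHS (n, r, m)
    simp only [hddef] at hzero
    exact sub_eq_zero.mp hzero
  · -- the coefficient identity implies strong symmetry
    intro H p hp Z hZ
    obtain ⟨hsym, hpd⟩ := hZ
    have hppos : (0:ℝ) < p := by exact_mod_cast hp.pos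
    have hpone : (1:ℝ) ≤ p := by exact_mod_cast hp.one_lt.le
    set s := Real.sqrt p with hsdef
    have hs0 : 0 < s := Real.sqrt_pos.mpr hppos
    have hsne : s ≠ 0 := hs0.ne'
    have hs2 : s^2 = (p:ℝ) := Real.sq_sqrt hppos.le
    set X : M2R := Z.map Complex.re with hXdef
    set Y : M2R := ImM Z with hYdef
    have hZeq : Z = mkZ X Y := SSpf.eq_mkZ ⟨hsym, hpd⟩
    have hX10 : X 1 0 = X 0 1 := by
      rw [hXdef]
      simp only [Matrix.map_apply]
      rw [hsym.apply 0 1]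
    have hY10 : Y 1 0 = Y 0 1 := by
      rw [hYdef]
      simp only [ImM, Matrix.map_apply]
      rw [hsym.apply 0 1]
    have hXmat : X = !![X 0 0, s*(X 0 1/s); s*(X 0 1/s), X 1 1] := by
      ext i j
      fin_cases i <;> fin_cases j <;>
        simp only [Matrix.of_apply, Matrix.cons_val_zero, Matrix.cons_val_one, Matrix.head_cons,
          Matrix.cons_val', Matrix.head_fin_const, Matrix.empty_val', Matrix.cons_val_fin_one,
          Fin.isValue, Fin.mk_zero, Fin.mk_one]
      · rw [mul_div_cancel₀ _ hsne]
      · rw [mul_div_cancel₀ _ hsne, hX10]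
    have hYmat : Y = !![Y 0 0, s*(Y 0 1/s); s*(Y 0 1/s), Y 1 1] := by
      ext i j
      fin_cases i <;> fin_cases j <;>
        simp only [Matrix.of_apply, Matrix.cons_val_zero, Matrix.cons_val_one, Matrix.head_cons,
          Matrix.cons_val', Matrix.head_fin_const, Matrix.empty_val', Matrix.cons_val_fin_one,
          Fin.isValue, Fin.mk_zero, Fin.mk_one]
      · rw [mul_div_cancel₀ _ hsne]
      · rw [mul_div_cancel₀ _ hsne, hY10]
    have hYpd' : (!![Y 0 0, s*(Y 0 1/s); s*(Y 0 1/s), Y 1 1] : M2R).PosDef := by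
      rw [← hYmat]
      exact hpd
    have h1 := SSpf.hasSum_TpUp k hk F A hA0 hFour p hp (X 0 0) (X 0 1/s) (X 1 1)
      (Y 0 0) (Y 0 1/s) (Y 1 1) hYpd'
    have h2 := SSpf.hasSum_TpLow k hk F A hA0 hFour p hp (X 0 0) (X 0 1/s) (X 1 1)
      (Y 0 0) (Y 0 1/s) (Y 1 1) hYpd'
    obtain ⟨hw₁, hw₃, hw₂⟩ := SSpf.posDef_elim hYpd'
    have hwlt : (p:ℝ) * (Y 0 1/s)^2 < Y 0 0 * Y 1 1 := by nlinarith
    have hwpd : (!![Y 0 0, Y 0 1/s; Y 0 1/s, Y 1 1] : M2R).PosDef := by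
      apply SSpf.posDef_mk _ _ _ hw₁
      nlinarith [sq_nonneg (Y 0 1/s)]
    have hfe : (fun v : ℤ × ℤ × ℤ =>
        ((p:ℂ)^(k-1) * A !![(v.1:ℝ)/(p:ℝ), (v.2.1:ℝ)/(2*(p:ℝ)); (v.2.1:ℝ)/(2*(p:ℝ)), (v.2.2:ℝ)]
            !![(p:ℝ)*(Y 0 0), (p:ℝ)*(Y 0 1/s); (p:ℝ)*(Y 0 1/s), Y 1 1]
          + A !![(p:ℝ)*(v.1:ℝ), (v.2.1:ℝ)/2; (v.2.1:ℝ)/2, (v.2.2:ℝ)] !![(Y 0 0)/(p:ℝ), Y 0 1/s; Y 0 1/s, Y 1 1])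
        * Complex.exp (2*(Real.pi:ℂ)*Complex.I*((v.1:ℂ)*((X 0 0):ℝ) + (v.2.1:ℂ)*((X 0 1/s):ℝ) + (v.2.2:ℂ)*((X 1 1):ℝ))))
        = fun v : ℤ × ℤ × ℤ =>
        ((p:ℂ)^(k-1) * A !![(v.1:ℝ), (v.2.1:ℝ)/(2*(p:ℝ)); (v.2.1:ℝ)/(2*(p:ℝ)), (v.2.2:ℝ)/(p:ℝ)]
            !![Y 0 0, (p:ℝ)*(Y 0 1/s); (p:ℝ)*(Y 0 1/s), (p:ℝ)*(Y 1 1)]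
          + A !![(v.1:ℝ), (v.2.1:ℝ)/2; (v.2.1:ℝ)/2, (p:ℝ)*(v.2.2:ℝ)] !![Y 0 0, Y 0 1/s; Y 0 1/s, (Y 1 1)/(p:ℝ)])
        * Complex.exp (2*(Real.pi:ℂ)*Complex.I*((v.1:ℂ)*((X 0 0):ℝ) + (v.2.1:ℂ)*((X 0 1/s):ℝ) + (v.2.2:ℂ)*((X 1 1):ℝ))) := by
      funext v
      rw [H p hp v.1 v.2.1 v.2.2 (Y 0 0) (Y 0 1/s) (Y 1 1) hwpd hwlt]
    rw [hfe] at h1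
    have hgoal : mkZ !![X 0 0, s*(X 0 1/s); s*(X 0 1/s), X 1 1]
        !![Y 0 0, s*(Y 0 1/s); s*(Y 0 1/s), Y 1 1] = Z := by
      rw [hZeq, ← hXmat, ← hYmat]
    rw [hgoal] at h1 h2
    exact h1.unique h2

end
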